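/- arXiv:1810.03171 — 3 statements merged into one kernel-verified Lean document; each statement's English description precedes it below -/
import Mathlib

section
/- Let s ∈ (0,1), p ∈ (1,∞) and N > sp, and set p*_s = Np/(N−sp). Let (u_n) be a sequence of measurable functions on ℝ^N with sup_n (‖u_n‖_{L^p}^p + [u_n]_{s,p}^p) < ∞. If there exists R > 0 such that lim_{n→∞} sup_{y ∈ ℝ^N} ∫_{B_R(y)} |u_n|^p dx = 0, then ‖u_n‖_{L^t(ℝ^N)} → 0 for every t ∈ (p, p*_s). -/
open MeasureTheory Filter Topology Set Metric
open scoped ENNReal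

noncomputable section

/-- Euclidean space `ℝ^N`. -/
abbrev Euc (N : ℕ) : Type := EuclideanSpace ℝ (Fin N)

/-- The `p`-th power of the Gagliardo seminorm `[u]_{s,p}^p`. -/
def gagliardoP (N : ℕ) (s p : ℝ) (u : Euc N → ℝ) : ℝ≥0∞ :=
  ∫⁻ x : Euc N, ∫⁻ y : Euc N,
    ENNReal.ofReal (|u x - u y| ^ p / ‖x - y‖ ^ ((N : ℝ) + s * p))

/-- The `p`-th power of the `L^p` norm, `‖u‖_{L^p}^p`. -/
def lpP (N : ℕ) (p : ℝ) (u : Euc N → ℝ) : ℝ≥0∞ :=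
  ∫⁻ x : Euc N, ENNReal.ofReal (|u x| ^ p)

/-- localized Gagliardo integrand -/
def gg (N : ℕ) (s p : ℝ) (u : Euc N → ℝ) (x : Euc N) : ℝ≥0∞ :=
  ∫⁻ z, ENNReal.ofReal (|u x - u z| ^ p / ‖x - z‖ ^ ((N : ℝ) + s * p))

lemma gg_meas {N : ℕ} {s p : ℝ} {u : Euc N → ℝ} (hu : Measurable u) :
    Measurable (gg N s p u) := by
  apply Measurable.lintegral_prod_right (f := fun x z =>
    ENNReal.ofReal (|u x - u z| ^ p / ‖x - z‖ ^ ((N : ℝ) + s * p)))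
  apply Measurable.ennreal_ofReal
  apply Measurable.div
  · exact (((hu.comp measurable_fst).sub (hu.comp measurable_snd)).abs).pow measurable_const
  · exact ((measurable_fst.sub measurable_snd).norm).pow measurable_const

lemma hedberg {N : ℕ} (hN0 : 0 < N) {s p τ r : ℝ} (hs0 : 0 < s) (hp : 1 < p) (hτ : 1 < τ)
    {u : Euc N → ℝ} (hu : Measurable u) (hr : 0 < r) {V : ℝ≥0∞} (x : Euc N)
    (hV : ∫⁻ z in Metric.ball x r, ENNReal.ofReal (|u z| ^ τ) ≤ V) :
    ENNReal.ofReal |u x| ≤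
      (volume (Metric.ball (0:Euc N) 1)) ^ (-(1:ℝ)/p) * ENNReal.ofReal r ^ s
          * (gg N s p u x) ^ (1/p)
      + (volume (Metric.ball (0:Euc N) 1)) ^ (-(1:ℝ)/τ) * ENNReal.ofReal r ^ (-(N:ℝ)/τ)
          * V ^ (1/τ) := by
  haveI : Nontrivial (Euc N) := by
    apply Module.nontrivial_of_finrank_pos (R := ℝ)
    rw [finrank_euclideanSpace_fin]; exact hN0
  set c := volume (Metric.ball (0:Euc N) 1) with hc
  have hc0 : c ≠ 0 := (measure_ball_pos _ _ one_pos).ne'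
  have hct : c ≠ ⊤ := measure_ball_lt_top.ne
  set b := ENNReal.ofReal r with hbdef
  have hb0 : b ≠ 0 := by simp [hbdef, hr]
  have hbt : b ≠ ⊤ := ENNReal.ofReal_ne_top
  set B := Metric.ball x r with hB
  have hμB : volume B = b ^ (N:ℝ) * c := by
    rw [hB, Measure.addHaar_ball_of_pos _ _ hr]
    congr 1
    rw [finrank_euclideanSpace_fin, hbdef, ENNReal.ofReal_pow hr.le, ← ENNReal.rpow_natCast]
  have hμ0 : volume B ≠ 0 := by
    rw [hμB]
    exact mul_ne_zero (ENNReal.rpow_pos (pos_iff_ne_zero.2 hb0) hbt).ne' hc0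
  have hμt : volume B ≠ ⊤ := by
    rw [hμB]
    exact ENNReal.mul_ne_top (ENNReal.rpow_ne_top_of_nonneg (Nat.cast_nonneg N) hbt) hct
  have hp0 : (0:ℝ) < p := lt_trans one_pos hp
  have hτ0 : (0:ℝ) < τ := lt_trans one_pos hτ
  -- conjugate exponents
  have hpq : Real.HolderConjugate p (Real.conjExponent p) := Real.HolderConjugate.conjExponent hp
  have hτq : Real.HolderConjugate τ (Real.conjExponent τ) := Real.HolderConjugate.conjExponent hτ
  set p' := Real.conjExponent p
  set τ' := Real.conjExponent τ
  set I₁ := ∫⁻ z in B, ENNReal.ofReal |u x - u z| with hI₁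
  set I₂ := ∫⁻ z in B, ENNReal.ofReal |u z| with hI₂
  -- Step 1
  have step1 : volume B * ENNReal.ofReal |u x| ≤ I₁ + I₂ := by
    have : volume B * ENNReal.ofReal |u x| = ∫⁻ _ in B, ENNReal.ofReal |u x| := by
      rw [setLIntegral_const, mul_comm]
    rw [this, hI₁, hI₂, ← lintegral_add_left ((hu.const_sub _).abs.ennreal_ofReal)]
    apply lintegral_mono
    intro z
    have h1 : |u x| ≤ |u x - u z| + |u z| := by
      calc |u x| = |(u x - u z) + u z| := by ring_nf
      _ ≤ |u x - u z| + |u z| := abs_add_le _ _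
    calc ENNReal.ofReal |u x| ≤ ENNReal.ofReal (|u x - u z| + |u z|) :=
          ENNReal.ofReal_le_ofReal h1
    _ = ENNReal.ofReal |u x - u z| + ENNReal.ofReal |u z| :=
          ENNReal.ofReal_add (abs_nonneg _) (abs_nonneg _)
  -- Step 3 : kernel bound
  have step3 : (∫⁻ z in B, (ENNReal.ofReal |u x - u z|) ^ p)
      ≤ ENNReal.ofReal (r ^ ((N:ℝ) + s*p)) * gg N s p u x := by
    have hpt : ∀ z ∈ B, (ENNReal.ofReal |u x - u z|) ^ p ≤
        ENNReal.ofReal (r ^ ((N:ℝ) + s*p)) *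
          ENNReal.ofReal (|u x - u z| ^ p / ‖x - z‖ ^ ((N : ℝ) + s * p)) := by
      intro z hz
      rw [ENNReal.ofReal_rpow_of_nonneg (abs_nonneg _) hp0.le, ← ENNReal.ofReal_mul
        (Real.rpow_nonneg hr.le _)]
      apply ENNReal.ofReal_le_ofReal
      by_cases hzx : ‖x - z‖ = 0
      · have hxz : x = z := sub_eq_zero.mp (norm_eq_zero.mp hzx)
        have h0 : u x - u z = 0 := by rw [hxz]; ring
        rw [h0]
        simp only [abs_zero, Real.zero_rpow hp0.ne', zero_div, mul_zero, le_refl]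
      · have hnz : 0 < ‖x - z‖ := lt_of_le_of_ne (norm_nonneg _) (Ne.symm hzx)
        have hD : 0 < ‖x - z‖ ^ ((N : ℝ) + s * p) := Real.rpow_pos_of_pos hnz _
        have hDr : ‖x - z‖ ^ ((N : ℝ) + s * p) ≤ r ^ ((N:ℝ) + s*p) := by
          apply Real.rpow_le_rpow (norm_nonneg _) _ (by positivity)
          have : dist z x < r := Metric.mem_ball.mp hz
          rw [dist_comm, dist_eq_norm] at this
          exact this.le
        rw [mul_div_assoc']
        rw [mul_comm (r ^ ((N:ℝ) + s*p)), mul_div_assoc]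
        nth_rewrite 1 [← mul_one (|u x - u z| ^ p)]
        apply mul_le_mul_of_nonneg_left _ (by positivity)
        rw [le_div_iff₀ hD]
        simpa using hDr
    calc (∫⁻ z in B, (ENNReal.ofReal |u x - u z|) ^ p)
        ≤ ∫⁻ z in B, ENNReal.ofReal (r ^ ((N:ℝ) + s*p)) *
            ENNReal.ofReal (|u x - u z| ^ p / ‖x - z‖ ^ ((N : ℝ) + s * p)) := by
          apply setLIntegral_mono _ hpt
          apply Measurable.const_mul
          apply Measurable.ennreal_ofReal
          apply Measurable.div
          · exact ((hu.const_sub _).abs).pow measurable_const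
          · exact (((measurable_const.sub measurable_id').norm).pow measurable_const)
    _ = ENNReal.ofReal (r ^ ((N:ℝ) + s*p)) *
          ∫⁻ z in B, ENNReal.ofReal (|u x - u z| ^ p / ‖x - z‖ ^ ((N : ℝ) + s * p)) :=
          lintegral_const_mul' _ _ ENNReal.ofReal_ne_top
    _ ≤ ENNReal.ofReal (r ^ ((N:ℝ) + s*p)) * gg N s p u x := by
          apply mul_le_mul_right
          exact setLIntegral_le_lintegral _ _
  -- Step 2 : Hölder for I₁
  have step2 : I₁ ≤ (∫⁻ z in B, (ENNReal.ofReal |u x - u z|) ^ p) ^ (1/p)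
      * (volume B) ^ (1/p') := by
    have h := ENNReal.lintegral_mul_le_Lp_mul_Lq (volume.restrict B) hpq
      ((hu.const_sub (u x)).abs.ennreal_ofReal).aemeasurable
      (aemeasurable_const (b := (1:ℝ≥0∞)))
    simpa [lintegral_one, Measure.restrict_apply_univ] using h
  -- Step 4 : Hölder for I₂
  have step4 : I₂ ≤ V ^ (1/τ) * (volume B) ^ (1/τ') := by
    have h := ENNReal.lintegral_mul_le_Lp_mul_Lq (volume.restrict B) hτq
      (hu.abs.ennreal_ofReal).aemeasurable (aemeasurable_const (b := (1:ℝ≥0∞)))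
    have h2 : (∫⁻ z in B, (ENNReal.ofReal |u z|) ^ τ) ≤ V := by
      refine le_trans (le_of_eq ?_) hV
      apply lintegral_congr
      intro z
      rw [ENNReal.ofReal_rpow_of_nonneg (abs_nonneg _) hτ0.le]
    calc I₂ ≤ (∫⁻ z in B, (ENNReal.ofReal |u z|) ^ τ) ^ (1/τ) * (volume B) ^ (1/τ') := by
          simpa [lintegral_one, Measure.restrict_apply_univ] using h
    _ ≤ V ^ (1/τ) * (volume B) ^ (1/τ') :=
          mul_le_mul_left (ENNReal.rpow_le_rpow h2 (by positivity)) _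
  have step2' : I₁ ≤ (ENNReal.ofReal (r ^ ((N:ℝ) + s*p)) * gg N s p u x) ^ (1/p)
      * (volume B) ^ (1/p') :=
    le_trans step2 (mul_le_mul_left (ENNReal.rpow_le_rpow step3 (by positivity)) _)
  -- Step 5
  have step5 : ENNReal.ofReal |u x| ≤ (volume B)⁻¹ * (I₁ + I₂) := by
    have h2 : ENNReal.ofReal |u x| = (volume B)⁻¹ * (volume B * ENNReal.ofReal |u x|) := by
      rw [← mul_assoc, ENNReal.inv_mul_cancel hμ0 hμt, one_mul]
    rw [h2]; exact mul_le_mul_right step1 _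
  have hrw : ∀ (X : ℝ≥0∞) (e : ℝ), (volume B)⁻¹ * (X * volume B ^ e)
      = X * volume B ^ (e - 1) := by
    intro X e
    rw [show (e - 1 : ℝ) = e + (-1) by ring, ENNReal.rpow_add _ _ hμ0 hμt,
      ENNReal.rpow_neg_one]
    ring
  have hinvp : 1/p + 1/p' = 1 := by
    rw [one_div, one_div]; exact hpq.inv_add_inv_eq_one
  have hinvτ : 1/τ + 1/τ' = 1 := by
    rw [one_div, one_div]; exact hτq.inv_add_inv_eq_one
  have e1 : (ENNReal.ofReal (r ^ ((N:ℝ) + s*p)) * gg N s p u x) ^ (1/p)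
        * (volume B) ^ (1/p' - 1)
      = c ^ (-(1:ℝ)/p) * b ^ s * (gg N s p u x) ^ (1/p) := by
    rw [hμB, ← ENNReal.ofReal_rpow_of_pos hr,
      ENNReal.mul_rpow_of_nonneg _ _ (by positivity : (0:ℝ) ≤ 1/p),
      ENNReal.mul_rpow_of_ne_top (ENNReal.rpow_ne_top_of_nonneg (Nat.cast_nonneg N) hbt) hct,
      ← ENNReal.rpow_mul, ← ENNReal.rpow_mul]
    have hb2 : b ^ (((N:ℝ) + s*p) * (1/p)) * b ^ ((N:ℝ) * (1/p' - 1)) = b ^ s := by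
      rw [← ENNReal.rpow_add _ _ hb0 hbt]
      congr 1
      have : 1/p' - 1 = -(1/p) := by linarith
      rw [this]
      field_simp
      ring
    have hc2 : c ^ (1/p' - 1) = c ^ (-(1:ℝ)/p) := by
      congr 1
      rw [neg_div]
      linarith
    calc b ^ (((N:ℝ) + s*p) * (1/p)) * gg N s p u x ^ (1/p)
          * (b ^ ((N:ℝ) * (1/p' - 1)) * c ^ (1/p' - 1))
        = (b ^ (((N:ℝ) + s*p) * (1/p)) * b ^ ((N:ℝ) * (1/p' - 1))) * c ^ (1/p' - 1)
            * gg N s p u x ^ (1/p) := by ring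
    _ = c ^ (-(1:ℝ)/p) * b ^ s * gg N s p u x ^ (1/p) := by rw [hb2, hc2]; ring
  have e2 : V ^ (1/τ) * (volume B) ^ (1/τ' - 1)
      = c ^ (-(1:ℝ)/τ) * b ^ (-(N:ℝ)/τ) * V ^ (1/τ) := by
    rw [hμB,
      ENNReal.mul_rpow_of_ne_top (ENNReal.rpow_ne_top_of_nonneg (Nat.cast_nonneg N) hbt) hct,
      ← ENNReal.rpow_mul]
    have hb2 : ((N:ℝ) * (1/τ' - 1)) = -(N:ℝ)/τ := by
      have : 1/τ' - 1 = -(1/τ) := by linarith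
      rw [this]
      field_simp
    have hc2 : (1/τ' - 1) = -(1:ℝ)/τ := by
      rw [neg_div]; linarith
    rw [hb2, hc2]
    ring
  calc ENNReal.ofReal |u x| ≤ (volume B)⁻¹ * (I₁ + I₂) := step5
  _ ≤ (volume B)⁻¹ * ((ENNReal.ofReal (r ^ ((N:ℝ) + s*p)) * gg N s p u x) ^ (1/p)
        * (volume B) ^ (1/p') + V ^ (1/τ) * (volume B) ^ (1/τ')) :=
      mul_le_mul_right (add_le_add step2' step4) _
  _ = (ENNReal.ofReal (r ^ ((N:ℝ) + s*p)) * gg N s p u x) ^ (1/p) * (volume B) ^ (1/p' - 1)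
      + V ^ (1/τ) * (volume B) ^ (1/τ' - 1) := by
      rw [mul_add, hrw, hrw]
  _ = c ^ (-(1:ℝ)/p) * b ^ s * (gg N s p u x) ^ (1/p)
      + c ^ (-(1:ℝ)/τ) * b ^ (-(N:ℝ)/τ) * V ^ (1/τ) := by rw [e1, e2]

lemma rpow_ne_top' {x : ℝ≥0∞} (hx0 : x ≠ 0) (hxt : x ≠ ⊤) (y : ℝ) : x ^ y ≠ ⊤ := by
  simp [ENNReal.rpow_eq_top_iff, hx0, hxt]

lemma cheby {α : Type*} [MeasurableSpace α] {μ : Measure α} {f : α → ℝ≥0∞}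
    (hf : AEMeasurable f μ) {w : ℝ≥0∞} (hw0 : w ≠ 0) (hwt : w ≠ ⊤) :
    μ {x | w ≤ f x} ≤ (∫⁻ x, f x ∂μ) / w := by
  have h := mul_meas_ge_le_lintegral₀ hf w
  rw [ENNReal.le_div_iff_mul_le (Or.inl hw0) (Or.inl hwt)]
  rwa [mul_comm]

lemma distrib {N : ℕ} (hN0 : 0 < N) {s p τ r : ℝ} (hs0 : 0 < s) (hp : 1 < p) (hτ : 1 < τ)
    {u : Euc N → ℝ} (hu : Measurable u) (hr : 0 < r) {V Γ : ℝ≥0∞}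
    (hΓ : ∫⁻ x, gg N s p u x ≤ Γ)
    (hV : ∀ x : Euc N, ∫⁻ z in Metric.ball x r, ENNReal.ofReal (|u z| ^ τ) ≤ V)
    {lam : ℝ} (hlam : 0 < lam)
    (hsmall : (volume (Metric.ball (0:Euc N) 1)) ^ (-(1:ℝ)/τ)
        * ENNReal.ofReal r ^ (-(N:ℝ)/τ) * V ^ (1/τ) ≤ ENNReal.ofReal lam / 2) :
    volume {x : Euc N | lam < |u x|} ≤
      Γ * (2 * (volume (Metric.ball (0:Euc N) 1)) ^ (-(1:ℝ)/p) * ENNReal.ofReal r ^ s) ^ p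
        * (ENNReal.ofReal lam) ^ (-p) := by
  haveI : Nontrivial (Euc N) := by
    apply Module.nontrivial_of_finrank_pos (R := ℝ)
    rw [finrank_euclideanSpace_fin]; exact hN0
  have hp0 : (0:ℝ) < p := lt_trans one_pos hp
  set c := volume (Metric.ball (0:Euc N) 1) with hc
  have hc0 : c ≠ 0 := (measure_ball_pos _ _ one_pos).ne'
  have hct : c ≠ ⊤ := measure_ball_lt_top.ne
  set b := ENNReal.ofReal r with hbdef
  have hb0 : b ≠ 0 := by simp [hbdef, hr]
  have hbt : b ≠ ⊤ := ENNReal.ofReal_ne_top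
  set D := c ^ (-(1:ℝ)/p) * b ^ s with hD
  have hD0 : D ≠ 0 := by
    apply mul_ne_zero
    · exact (ENNReal.rpow_pos (pos_iff_ne_zero.2 hc0) hct).ne'
    · exact (ENNReal.rpow_pos (pos_iff_ne_zero.2 hb0) hbt).ne'
  have hDt : D ≠ ⊤ := by
    apply ENNReal.mul_ne_top
    · exact rpow_ne_top' hc0 hct _
    · exact rpow_ne_top' hb0 hbt _
  set a := ENNReal.ofReal lam with ha
  have ha0 : a ≠ 0 := by simp [ha, hlam]
  have hat : a ≠ ⊤ := ENNReal.ofReal_ne_top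
  set w := (a / 2 / D) ^ p with hw
  have hsub : {x : Euc N | lam < |u x|} ⊆ {x : Euc N | w ≤ gg N s p u x} := by
    intro x hx
    simp only [Set.mem_setOf_eq] at hx ⊢
    have h1 : a ≤ D * (gg N s p u x) ^ (1/p) + a / 2 := by
      calc a ≤ ENNReal.ofReal |u x| := by
            exact ENNReal.ofReal_le_ofReal hx.le
      _ ≤ D * (gg N s p u x) ^ (1/p)
          + c ^ (-(1:ℝ)/τ) * b ^ (-(N:ℝ)/τ) * V ^ (1/τ) :=
            hedberg hN0 hs0 hp hτ hu hr x (hV x)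
      _ ≤ D * (gg N s p u x) ^ (1/p) + a / 2 := add_le_add_right hsmall _
    have h2 : a / 2 ≤ D * (gg N s p u x) ^ (1/p) := by
      have := tsub_le_iff_right.mpr h1
      rwa [ENNReal.sub_half hat] at this
    have h3 : a / 2 / D ≤ (gg N s p u x) ^ (1/p) := by
      rw [ENNReal.div_le_iff_le_mul (Or.inl hD0) (Or.inl hDt)]
      rwa [mul_comm] at h2
    calc w = (a / 2 / D) ^ p := hw
    _ ≤ ((gg N s p u x) ^ (1/p)) ^ p := ENNReal.rpow_le_rpow h3 hp0.le
    _ = gg N s p u x := by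
        rw [← ENNReal.rpow_mul, one_div, inv_mul_cancel₀ hp0.ne', ENNReal.rpow_one]
  have hw0 : w ≠ 0 := by
    apply (ENNReal.rpow_pos _ _).ne'
    · apply ENNReal.div_pos
      · exact (ENNReal.div_pos ha0 (by norm_num)).ne'
      · exact hDt
    · apply (ENNReal.div_lt_top (ENNReal.div_lt_top hat (by norm_num)).ne hD0).ne
  have hwt : w ≠ ⊤ := by
    apply ENNReal.rpow_ne_top_of_nonneg hp0.le
    exact (ENNReal.div_lt_top (ENNReal.div_lt_top hat (by norm_num)).ne hD0).ne
  calc volume {x : Euc N | lam < |u x|}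
      ≤ volume {x : Euc N | w ≤ gg N s p u x} := measure_mono hsub
  _ ≤ (∫⁻ x, gg N s p u x) / w := cheby (gg_meas hu).aemeasurable hw0 hwt
  _ ≤ Γ / w := ENNReal.div_le_div_right hΓ _
  _ = Γ * w⁻¹ := by rw [div_eq_mul_inv]
  _ = Γ * (2 * c ^ (-(1:ℝ)/p) * b ^ s) ^ p * a ^ (-p) := by
      rw [mul_assoc]
      congr 1
      rw [hw, ← ENNReal.inv_rpow]
      have : (a / 2 / D)⁻¹ = 2 * c ^ (-(1:ℝ)/p) * b ^ s * a⁻¹ := by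
        rw [div_eq_mul_inv, div_eq_mul_inv,
          ENNReal.mul_inv (Or.inr (ENNReal.inv_ne_top.mpr hD0))
            (Or.inr (ENNReal.inv_ne_zero.mpr hDt)),
          ENNReal.mul_inv (Or.inl ha0) (Or.inl hat), inv_inv, inv_inv, hD]
        ring
      rw [this, ENNReal.mul_rpow_of_nonneg _ _ hp0.le, ENNReal.rpow_neg, ENNReal.inv_rpow]

lemma lint_Ioc_rpow {A c : ℝ} (hA : 0 < A) (hc : -1 < c) :
    ∫⁻ lam in Set.Ioc 0 A, ENNReal.ofReal (lam ^ c) = ENNReal.ofReal (A ^ (c+1) / (c+1)) := by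
  rw [← ofReal_integral_eq_lintegral_ofReal]
  · congr 1
    rw [← intervalIntegral.integral_of_le hA.le, integral_rpow (Or.inl hc),
      Real.zero_rpow (by linarith : c + 1 ≠ 0)]
    ring
  · have h := intervalIntegral.intervalIntegrable_rpow' (a := 0) (b := A) hc
    rwa [intervalIntegrable_iff_integrableOn_Ioc_of_le hA.le] at h
  · filter_upwards [self_mem_ae_restrict measurableSet_Ioc] with x hx
    exact Real.rpow_nonneg hx.1.le _

lemma lint_Ioi_rpow {A c : ℝ} (hA : 0 < A) (hc : c < -1) :
    ∫⁻ lam in Set.Ioi A, ENNReal.ofReal (lam ^ c) = ENNReal.ofReal (-A ^ (c+1) / (c+1)) := by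
  rw [← ofReal_integral_eq_lintegral_ofReal]
  · rw [integral_Ioi_rpow_of_lt hc hA]
  · exact integrableOn_Ioi_rpow_of_lt hc hA
  · filter_upwards [self_mem_ae_restrict measurableSet_Ioi] with x hx
    exact Real.rpow_nonneg (le_trans hA.le (le_of_lt hx)) _

lemma tail_bound {N : ℕ} {u : Euc N → ℝ} (hu : Measurable u) {t p q Λ : ℝ} {K M : ℝ≥0∞}
    (hp0 : 0 < p) (hpt : p < t) (htq : t < q) (hΛ : 0 < Λ) (hKt : K ≠ ⊤) (hMt : M ≠ ⊤)
    (hK : ∀ lam : ℝ, 0 < lam →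
      volume {x : Euc N | lam < |u x|} ≤ K * (ENNReal.ofReal lam) ^ (-p))
    (hM : ∀ lam : ℝ, Λ ≤ lam →
      volume {x : Euc N | lam < |u x|} ≤ M * (ENNReal.ofReal lam) ^ (-q)) :
    ∫⁻ x, ENNReal.ofReal (|u x| ^ t) ≤
      ENNReal.ofReal t * (K * ENNReal.ofReal (Λ ^ (t - p) / (t - p))
        + M * ENNReal.ofReal (Λ ^ (t - q) / (q - t))) := by
  have ht0 : 0 < t := lt_trans hp0 hpt
  rw [lintegral_rpow_eq_lintegral_meas_lt_mul volume (ae_of_all _ fun x => abs_nonneg (u x))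
    hu.abs.aemeasurable ht0]
  apply mul_le_mul_right
  rw [← Set.Ioc_union_Ioi_eq_Ioi hΛ.le,
    lintegral_union measurableSet_Ioi (Set.Ioc_disjoint_Ioi le_rfl)]
  have hT1 : (∫⁻ lam in Set.Ioc 0 Λ,
      volume {x : Euc N | lam < |u x|} * ENNReal.ofReal (lam ^ (t-1)))
      ≤ K * ENNReal.ofReal (Λ ^ (t - p) / (t - p)) := by
    have hmono : ∀ lam ∈ Set.Ioc (0:ℝ) Λ,
        volume {x : Euc N | lam < |u x|} * ENNReal.ofReal (lam ^ (t-1))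
          ≤ K * ENNReal.ofReal (lam ^ (t-1-p)) := by
      intro lam hlam
      have hl0 : 0 < lam := hlam.1
      calc volume {x : Euc N | lam < |u x|} * ENNReal.ofReal (lam ^ (t-1))
          ≤ K * (ENNReal.ofReal lam) ^ (-p) * ENNReal.ofReal (lam ^ (t-1)) :=
            mul_le_mul_left (hK lam hl0) _
      _ = K * ENNReal.ofReal (lam ^ (t-1-p)) := by
          rw [mul_assoc, ENNReal.ofReal_rpow_of_pos hl0,
            ← ENNReal.ofReal_mul (Real.rpow_nonneg hl0.le _), ← Real.rpow_add hl0]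
          congr 2
          ring
    calc (∫⁻ lam in Set.Ioc 0 Λ,
        volume {x : Euc N | lam < |u x|} * ENNReal.ofReal (lam ^ (t-1)))
        ≤ ∫⁻ lam in Set.Ioc 0 Λ, K * ENNReal.ofReal (lam ^ (t-1-p)) := by
          apply setLIntegral_mono _ hmono
          exact (measurable_id.pow_const _).ennreal_ofReal.const_mul _
    _ = K * ∫⁻ lam in Set.Ioc 0 Λ, ENNReal.ofReal (lam ^ (t-1-p)) :=
          lintegral_const_mul' _ _ hKt
    _ = K * ENNReal.ofReal (Λ ^ (t - p) / (t - p)) := by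
          rw [lint_Ioc_rpow hΛ (by linarith : (-1:ℝ) < t-1-p)]
          congr 2 <;> ring
  have hT2 : (∫⁻ lam in Set.Ioi Λ,
      volume {x : Euc N | lam < |u x|} * ENNReal.ofReal (lam ^ (t-1)))
      ≤ M * ENNReal.ofReal (Λ ^ (t - q) / (q - t)) := by
    have hmono : ∀ lam ∈ Set.Ioi Λ,
        volume {x : Euc N | lam < |u x|} * ENNReal.ofReal (lam ^ (t-1))
          ≤ M * ENNReal.ofReal (lam ^ (t-1-q)) := by
      intro lam hlam
      have hl0 : 0 < lam := lt_trans hΛ hlam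
      calc volume {x : Euc N | lam < |u x|} * ENNReal.ofReal (lam ^ (t-1))
          ≤ M * (ENNReal.ofReal lam) ^ (-q) * ENNReal.ofReal (lam ^ (t-1)) :=
            mul_le_mul_left (hM lam (le_of_lt hlam)) _
      _ = M * ENNReal.ofReal (lam ^ (t-1-q)) := by
          rw [mul_assoc, ENNReal.ofReal_rpow_of_pos hl0,
            ← ENNReal.ofReal_mul (Real.rpow_nonneg hl0.le _), ← Real.rpow_add hl0]
          congr 2
          ring
    calc (∫⁻ lam in Set.Ioi Λ,
        volume {x : Euc N | lam < |u x|} * ENNReal.ofReal (lam ^ (t-1)))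
        ≤ ∫⁻ lam in Set.Ioi Λ, M * ENNReal.ofReal (lam ^ (t-1-q)) := by
          apply setLIntegral_mono _ hmono
          exact (measurable_id.pow_const _).ennreal_ofReal.const_mul _
    _ = M * ∫⁻ lam in Set.Ioi Λ, ENNReal.ofReal (lam ^ (t-1-q)) :=
          lintegral_const_mul' _ _ hMt
    _ = M * ENNReal.ofReal (Λ ^ (t - q) / (q - t)) := by
          rw [lint_Ioi_rpow hΛ (by linarith : t-1-q < (-1:ℝ))]
          congr 1
          congr 1
          rw [show t-1-q+1 = t-q by ring,
            div_eq_div_iff (sub_ne_zero.mpr (by linarith : t ≠ q))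
              (sub_ne_zero.mpr (by linarith : q ≠ t))]
          ring
  exact add_le_add hT1 hT2

lemma chebyP {N : ℕ} {p : ℝ} (hp0 : 0 < p) {u : Euc N → ℝ} (hu : Measurable u) {K : ℝ≥0∞}
    (hK : (∫⁻ x, ENNReal.ofReal (|u x| ^ p)) ≤ K) {lam : ℝ} (hlam : 0 < lam) :
    volume {x : Euc N | lam < |u x|} ≤ K * (ENNReal.ofReal lam) ^ (-p) := by
  have hw0 : ENNReal.ofReal (lam ^ p) ≠ 0 := by
    simp [ENNReal.ofReal_eq_zero, not_le, Real.rpow_pos_of_pos hlam]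
  have hsub : {x : Euc N | lam < |u x|} ⊆
      {x : Euc N | ENNReal.ofReal (lam ^ p) ≤ ENNReal.ofReal (|u x| ^ p)} := by
    intro x hx
    exact ENNReal.ofReal_le_ofReal (Real.rpow_le_rpow hlam.le (le_of_lt hx) hp0.le)
  calc volume {x : Euc N | lam < |u x|}
      ≤ volume {x : Euc N | ENNReal.ofReal (lam ^ p) ≤ ENNReal.ofReal (|u x| ^ p)} :=
        measure_mono hsub
  _ ≤ (∫⁻ x, ENNReal.ofReal (|u x| ^ p)) / ENNReal.ofReal (lam ^ p) :=
        cheby ((hu.abs.pow measurable_const).ennreal_ofReal).aemeasurable hw0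
          ENNReal.ofReal_ne_top
  _ ≤ K / ENNReal.ofReal (lam ^ p) := ENNReal.div_le_div_right hK _
  _ = K * (ENNReal.ofReal lam) ^ (-p) := by
      rw [div_eq_mul_inv, ← ENNReal.ofReal_rpow_of_pos hlam, ← ENNReal.rpow_neg]

lemma key {N : ℕ} {s p τ R t : ℝ} (hN0 : 0 < N) (hs0 : 0 < s) (hp : 1 < p) (hτ : 1 < τ)
    (hR : 0 < R) {K Γ : ℝ≥0∞} (hKt : K ≠ ⊤) (hΓt : Γ ≠ ⊤)
    (hpt : p < t) (htq : t < p + s * p * τ / (N:ℝ)) {ε : ℝ≥0∞} (hε : 0 < ε) :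
    ∃ δ : ℝ≥0∞, 0 < δ ∧
      ∀ u : Euc N → ℝ, Measurable u →
        (∫⁻ x, ENNReal.ofReal (|u x| ^ p)) ≤ K →
        (∫⁻ x, gg N s p u x) ≤ Γ →
        (∀ y : Euc N, (∫⁻ z in Metric.ball y R, ENNReal.ofReal (|u z| ^ τ)) ≤ δ) →
        (∫⁻ x, ENNReal.ofReal (|u x| ^ t)) ≤ ε := by
  haveI : Nontrivial (Euc N) := by
    apply Module.nontrivial_of_finrank_pos (R := ℝ)
    rw [finrank_euclideanSpace_fin]; exact hN0
  have hNR : (0:ℝ) < N := by exact_mod_cast hN0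
  have hp0 : (0:ℝ) < p := one_pos.trans hp
  have hτ0 : (0:ℝ) < τ := one_pos.trans hτ
  have ht0 : (0:ℝ) < t := hp0.trans hpt
  set q := p + s * p * τ / (N:ℝ) with hq
  have haq : (0:ℝ) < s * p * τ / (N:ℝ) := by positivity
  have hpq' : p < q := by rw [hq]; linarith
  have htq2 : t < q := htq
  set c := volume (Metric.ball (0:Euc N) 1) with hc
  have hc0 : c ≠ 0 := (measure_ball_pos _ _ one_pos).ne'
  have hct : c ≠ ⊤ := measure_ball_lt_top.ne
  set C₁ := c ^ (-(1:ℝ)/p) with hC₁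
  set C₂ := c ^ (-(1:ℝ)/τ) with hC₂
  have hC₁0 : C₁ ≠ 0 := (ENNReal.rpow_pos (pos_iff_ne_zero.2 hc0) hct).ne'
  have hC₁t : C₁ ≠ ⊤ := rpow_ne_top' hc0 hct _
  have hC₂0 : C₂ ≠ 0 := (ENNReal.rpow_pos (pos_iff_ne_zero.2 hc0) hct).ne'
  have hC₂t : C₂ ≠ ⊤ := rpow_ne_top' hc0 hct _
  set η := s * p * τ / (N:ℝ) + (t - q)/2 with hη
  have hη0 : 0 < η := by rw [hη, hq]; linarith
  set Rb := R ^ ((2*(N:ℝ))/τ) with hRb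
  have hRb0 : 0 < Rb := Real.rpow_pos_of_pos hR _
  -- the bounding function
  set F : ℝ → ℝ≥0∞ := fun d => ENNReal.ofReal t *
    (K * ENNReal.ofReal (1/(t-p)) * (2*C₂*(ENNReal.ofReal d)^(1/τ))^((t-p)/2)
      + Γ * (2*C₁)^p * ENNReal.ofReal (1/(q-t)) * (2*C₂*(ENNReal.ofReal d)^(1/τ))^η)
    with hF
  -- continuity of F at 0
  have hWEtend : Tendsto (fun d : ℝ => 2*C₂*(ENNReal.ofReal d)^(1/τ)) (𝓝 0) (𝓝 0) := by
    have h1 : Tendsto (fun d : ℝ => ENNReal.ofReal d) (𝓝 0) (𝓝 0) := by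
      simpa using ENNReal.continuous_ofReal.tendsto 0
    have h2 := (ENNReal.continuous_rpow_const (y := 1/τ)).tendsto 0
    rw [ENNReal.zero_rpow_of_pos (by positivity)] at h2
    have h3 := h2.comp h1
    have h4 := ENNReal.Tendsto.const_mul (a := 2*C₂) h3
      (Or.inr (ENNReal.mul_ne_top (by norm_num) hC₂t))
    simpa using h4
  have hFtend : Tendsto F (𝓝 0) (𝓝 0) := by
    have g1 : Tendsto (fun d : ℝ => (2*C₂*(ENNReal.ofReal d)^(1/τ))^((t-p)/2)) (𝓝 0) (𝓝 0) := by
      have h2 := (ENNReal.continuous_rpow_const (y := (t-p)/2)).tendsto 0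
      rw [ENNReal.zero_rpow_of_pos (by linarith : (0:ℝ) < (t-p)/2)] at h2
      exact h2.comp hWEtend
    have g2 : Tendsto (fun d : ℝ => (2*C₂*(ENNReal.ofReal d)^(1/τ))^η) (𝓝 0) (𝓝 0) := by
      have h2 := (ENNReal.continuous_rpow_const (y := η)).tendsto 0
      rw [ENNReal.zero_rpow_of_pos hη0] at h2
      exact h2.comp hWEtend
    have g1' := ENNReal.Tendsto.const_mul (a := K * ENNReal.ofReal (1/(t-p))) g1
      (Or.inr (ENNReal.mul_ne_top hKt ENNReal.ofReal_ne_top))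
    have g2' := ENNReal.Tendsto.const_mul
      (a := Γ * (2*C₁)^p * ENNReal.ofReal (1/(q-t))) g2
      (Or.inr (ENNReal.mul_ne_top (ENNReal.mul_ne_top hΓt
        (rpow_ne_top' (by simp [hC₁0] : (2*C₁ : ℝ≥0∞) ≠ 0)
          (ENNReal.mul_ne_top (by norm_num) hC₁t) _)) ENNReal.ofReal_ne_top))
    have gsum := Filter.Tendsto.add g1' g2'
    rw [mul_zero, mul_zero, add_zero] at gsum
    have := ENNReal.Tendsto.const_mul (a := ENNReal.ofReal t) gsum
      (Or.inr ENNReal.ofReal_ne_top)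
    rw [mul_zero] at this
    exact this
  -- choose d
  have hev1 : ∀ᶠ d : ℝ in 𝓝 0, F d < ε := hFtend.eventually_lt_const hε
  have hev2 : ∀ᶠ d : ℝ in 𝓝 0, 2*C₂*(ENNReal.ofReal d)^(1/τ) < ENNReal.ofReal Rb :=
    hWEtend.eventually_lt_const (by simp [ENNReal.ofReal_pos, hRb0])
  have hev3 : ∀ᶠ d in 𝓝[Set.Ioi (0:ℝ)] (0:ℝ),
      (F d < ε ∧ 2*C₂*(ENNReal.ofReal d)^(1/τ) < ENNReal.ofReal Rb) ∧ d ∈ Set.Ioi (0:ℝ) :=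
    ((hev1.and hev2).filter_mono nhdsWithin_le_nhds).and self_mem_nhdsWithin
  obtain ⟨d, hd, hd0⟩ := hev3.exists
  obtain ⟨hdF, hdRb⟩ := hd
  have hd0' : (0:ℝ) < d := hd0
  refine ⟨ENNReal.ofReal d, by simp [ENNReal.ofReal_pos, hd0'], ?_⟩
  intro u hu hKu hΓu hVu
  set δ := ENNReal.ofReal d with hδ
  have hδ0 : δ ≠ 0 := by simp [hδ, ENNReal.ofReal_eq_zero, not_le, hd0']
  have hδt : δ ≠ ⊤ := ENNReal.ofReal_ne_top
  set W_E := 2*C₂*δ^(1/τ) with hWE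
  have hWE0 : W_E ≠ 0 := by
    apply mul_ne_zero
    · simp [hC₂0]
    · exact (ENNReal.rpow_pos (pos_iff_ne_zero.2 hδ0) hδt).ne'
  have hWEt : W_E ≠ ⊤ :=
    ENNReal.mul_ne_top (ENNReal.mul_ne_top (by norm_num) hC₂t)
      (rpow_ne_top' hδ0 hδt _)
  set W := W_E.toReal with hWdef
  have hW0 : 0 < W := ENNReal.toReal_pos hWE0 hWEt
  have hWRb : W ≤ Rb := by
    rw [hWdef]
    exact ENNReal.toReal_le_of_le_ofReal hRb0.le hdRb.le
  set Λ := W ^ ((1:ℝ)/2) with hΛdef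
  have hΛ0 : 0 < Λ := Real.rpow_pos_of_pos hW0 _
  set M := Γ * (2*C₁)^p * W_E^(s*p*τ/(N:ℝ)) with hM
  have hMt : M ≠ ⊤ :=
    ENNReal.mul_ne_top (ENNReal.mul_ne_top hΓt
      (rpow_ne_top' (by simp [hC₁0]) (ENNReal.mul_ne_top (by norm_num) hC₁t) _))
      (rpow_ne_top' hWE0 hWEt _)
  -- the q-tail distribution bound
  have claimB : ∀ lam : ℝ, Λ ≤ lam →
      volume {x : Euc N | lam < |u x|} ≤ M * (ENNReal.ofReal lam) ^ (-q) := by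
    intro lam hlam
    have hlam0 : 0 < lam := lt_of_lt_of_le hΛ0 hlam
    have ha0 : ENNReal.ofReal lam ≠ 0 := by simp [ENNReal.ofReal_eq_zero, not_le, hlam0]
    have hat : ENNReal.ofReal lam ≠ ⊤ := ENNReal.ofReal_ne_top
    set r := (W / lam) ^ (τ/(N:ℝ)) with hrdef
    have hWlam : 0 < W / lam := div_pos hW0 hlam0
    have hr0 : 0 < r := Real.rpow_pos_of_pos hWlam _
    have hrR : r ≤ R := by
      have h1 : W / lam ≤ W / Λ := by
        apply div_le_div_of_nonneg_left hW0.le hΛ0 hlam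
      have h2 : W / Λ = Λ := by
        rw [hΛdef, div_eq_iff (Real.rpow_pos_of_pos hW0 _).ne', ← Real.rpow_add hW0]
        norm_num
      have h3 : Λ ≤ R ^ ((N:ℝ)/τ) := by
        rw [hΛdef]
        calc W ^ ((1:ℝ)/2) ≤ Rb ^ ((1:ℝ)/2) :=
              Real.rpow_le_rpow hW0.le hWRb (by norm_num)
        _ = R ^ ((N:ℝ)/τ) := by
            rw [hRb, ← Real.rpow_mul hR.le]
            congr 1
            field_simp
      have h4 : W / lam ≤ R ^ ((N:ℝ)/τ) := le_trans h1 (by rw [h2]; exact h3)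
      calc r ≤ (R ^ ((N:ℝ)/τ)) ^ (τ/(N:ℝ)) :=
            Real.rpow_le_rpow hWlam.le h4 (by positivity)
      _ = R := by
          rw [← Real.rpow_mul hR.le]
          rw [show (N:ℝ)/τ * (τ/(N:ℝ)) = 1 by field_simp]
          exact Real.rpow_one R
    have hVr : ∀ x : Euc N, ∫⁻ z in Metric.ball x r, ENNReal.ofReal (|u z| ^ τ) ≤ δ :=
      fun x => le_trans (lintegral_mono_set (Metric.ball_subset_ball hrR)) (hVu x)
    have hδpow0 : δ^(1/τ) ≠ 0 := (ENNReal.rpow_pos (pos_iff_ne_zero.2 hδ0) hδt).ne'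
    have hδpowt : δ^(1/τ) ≠ ⊤ := rpow_ne_top' hδ0 hδt _
    have hsmall : C₂ * (ENNReal.ofReal r)^(-(N:ℝ)/τ) * δ^(1/τ)
        ≤ ENNReal.ofReal lam / 2 := by
      have e1 : (ENNReal.ofReal r)^(-(N:ℝ)/τ) = ENNReal.ofReal lam / W_E := by
        rw [ENNReal.ofReal_rpow_of_pos hr0, hrdef, ← Real.rpow_mul hWlam.le]
        rw [show τ/(N:ℝ) * (-(N:ℝ)/τ) = -1 by field_simp]
        rw [Real.rpow_neg_one, inv_div, ENNReal.ofReal_div_of_pos hW0, hWdef,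
          ENNReal.ofReal_toReal hWEt]
      rw [e1]
      apply le_of_eq
      rw [div_eq_mul_inv (ENNReal.ofReal lam) W_E, hWE,
        ENNReal.mul_inv (Or.inr (rpow_ne_top' hδ0 hδt _))
          (Or.inr hδpow0),
        ENNReal.mul_inv (Or.inl (by norm_num)) (Or.inl (by norm_num))]
      calc C₂ * (ENNReal.ofReal lam * ((2:ℝ≥0∞)⁻¹ * C₂⁻¹ * (δ^(1/τ))⁻¹)) * δ^(1/τ)
          = (C₂ * C₂⁻¹) * (δ^(1/τ) * (δ^(1/τ))⁻¹) * (ENNReal.ofReal lam * 2⁻¹) := by ring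
      _ = ENNReal.ofReal lam / 2 := by
          rw [ENNReal.mul_inv_cancel hC₂0 hC₂t, ENNReal.mul_inv_cancel hδpow0 hδpowt,
            one_mul, one_mul, div_eq_mul_inv]
    have hdist := distrib hN0 hs0 hp hτ hu hr0 hΓu hVr hlam0 hsmall
    refine le_trans hdist (le_of_eq ?_)
    have e2 : (ENNReal.ofReal r)^s = (W_E / ENNReal.ofReal lam) ^ (s*τ/(N:ℝ)) := by
      rw [ENNReal.ofReal_rpow_of_pos hr0, hrdef, ← Real.rpow_mul hWlam.le]
      rw [show τ/(N:ℝ) * s = s*τ/(N:ℝ) by ring]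
      rw [← ENNReal.ofReal_rpow_of_pos hWlam, ENNReal.ofReal_div_of_pos hlam0, hWdef,
        ENNReal.ofReal_toReal hWEt]
    rw [e2, hM]
    rw [ENNReal.mul_rpow_of_nonneg _ _ hp0.le, ← ENNReal.rpow_mul,
      ENNReal.div_rpow_of_nonneg _ _ (by positivity : (0:ℝ) ≤ s*τ/(N:ℝ) * p),
      ENNReal.div_eq_inv_mul, ← ENNReal.rpow_neg]
    rw [show s*τ/(N:ℝ)*p = s*p*τ/(N:ℝ) by ring]
    have e3 : (ENNReal.ofReal lam) ^ (-(s*p*τ/(N:ℝ))) * (ENNReal.ofReal lam) ^ (-p)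
        = (ENNReal.ofReal lam) ^ (-q) := by
      rw [← ENNReal.rpow_add _ _ ha0 hat]
      congr 1
      rw [hq]; ring
    calc Γ * ((2*C₁)^p * ((ENNReal.ofReal lam) ^ (-(s*p*τ/(N:ℝ)))
            * W_E ^ (s*p*τ/(N:ℝ)))) * (ENNReal.ofReal lam) ^ (-p)
        = Γ * (2*C₁)^p * W_E ^ (s*p*τ/(N:ℝ))
            * ((ENNReal.ofReal lam) ^ (-(s*p*τ/(N:ℝ))) * (ENNReal.ofReal lam) ^ (-p)) := by
          ring
    _ = Γ * (2*C₁)^p * W_E ^ (s*p*τ/(N:ℝ)) * (ENNReal.ofReal lam) ^ (-q) := by rw [e3]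
  -- apply the tail bound
  have claimA : ∀ lam : ℝ, 0 < lam →
      volume {x : Euc N | lam < |u x|} ≤ K * (ENNReal.ofReal lam) ^ (-p) :=
    fun lam hlam => chebyP hp0 hu hKu hlam
  have htail := tail_bound hu hp0 hpt htq2 hΛ0 hKt hMt claimA claimB
  refine le_trans htail (le_trans (le_of_eq ?_) hdF.le)
  -- identify with F d
  rw [hF]
  congr 1
  have eΛ1 : ENNReal.ofReal (Λ ^ (t - p) / (t-p)) =
      ENNReal.ofReal (1/(t-p)) * W_E ^ ((t-p)/2) := by
    rw [div_eq_mul_inv, ← one_div, ENNReal.ofReal_mul (by positivity), mul_comm]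
    congr 1
    rw [hΛdef, ← Real.rpow_mul hW0.le, ← ENNReal.ofReal_rpow_of_pos hW0, hWdef,
      ENNReal.ofReal_toReal hWEt]
    congr 1
    ring
  have eΛ2 : ENNReal.ofReal (Λ ^ (t - q) / (q-t)) =
      ENNReal.ofReal (1/(q-t)) * W_E ^ ((t-q)/2) := by
    rw [div_eq_mul_inv, ← one_div, ENNReal.ofReal_mul (by positivity), mul_comm]
    congr 1
    rw [hΛdef, ← Real.rpow_mul hW0.le, ← ENNReal.ofReal_rpow_of_pos hW0, hWdef,
      ENNReal.ofReal_toReal hWEt]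
    congr 1
    ring
  rw [eΛ1, eΛ2, hM]
  have e4 : W_E ^ (s*p*τ/(N:ℝ)) * W_E ^ ((t-q)/2) = W_E ^ η := by
    rw [← ENNReal.rpow_add _ _ hWE0 hWEt, hη]
  calc K * (ENNReal.ofReal (1/(t-p)) * W_E ^ ((t-p)/2))
        + Γ * (2*C₁)^p * W_E ^ (s*p*τ/(N:ℝ)) * (ENNReal.ofReal (1/(q-t)) * W_E ^ ((t-q)/2))
      = K * ENNReal.ofReal (1/(t-p)) * W_E ^ ((t-p)/2)
        + Γ * (2*C₁)^p * ENNReal.ofReal (1/(q-t))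
            * (W_E ^ (s*p*τ/(N:ℝ)) * W_E ^ ((t-q)/2)) := by ring
  _ = K * ENNReal.ofReal (1/(t-p)) * (2*C₂*δ^(1/τ)) ^ ((t-p)/2)
        + Γ * (2*C₁)^p * ENNReal.ofReal (1/(q-t)) * (2*C₂*δ^(1/τ)) ^ η := by
      rw [e4, hWE]

lemma main_tendsto {N : ℕ} {s p τ R t : ℝ} (hN0 : 0 < N) (hs0 : 0 < s) (hp : 1 < p)
    (hτ : 1 < τ) (hR : 0 < R) {K Γ : ℝ≥0∞} (hKt : K ≠ ⊤) (hΓt : Γ ≠ ⊤)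
    {u : ℕ → Euc N → ℝ} (hmeas : ∀ n, Measurable (u n))
    (hK : ∀ n, (∫⁻ x, ENNReal.ofReal (|u n x| ^ p)) ≤ K)
    (hΓ : ∀ n, (∫⁻ x, gg N s p (u n) x) ≤ Γ)
    (hpt : p < t) (htq : t < p + s * p * τ / (N:ℝ))
    (hvan : Tendsto (fun n => ⨆ y : Euc N,
      ∫⁻ z in Metric.ball y R, ENNReal.ofReal (|u n z| ^ τ)) atTop (𝓝 0)) :
    Tendsto (fun n => ∫⁻ x, ENNReal.ofReal (|u n x| ^ t)) atTop (𝓝 0) := by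
  rw [ENNReal.tendsto_nhds_zero]
  intro ε hε
  obtain ⟨δ, hδ0, hkey⟩ := key hN0 hs0 hp hτ hR hKt hΓt hpt htq hε
  filter_upwards [ENNReal.tendsto_nhds_zero.mp hvan δ hδ0] with n hn
  refine hkey (u n) (hmeas n) (hK n) (hΓ n) (fun y => le_trans ?_ hn)
  exact le_iSup (fun y => ∫⁻ z in Metric.ball y R, ENNReal.ofReal (|u n z| ^ τ)) y

/-- recursively defined exponent sequence -/
def Qseq (p a : ℝ) : ℕ → ℝ
  | 0 => p
  | (k+1) => p + a * Qseq p a k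

lemma bootstrap {N : ℕ} {s p R : ℝ} (hN0 : 0 < N) (hs0 : 0 < s) (hp : 1 < p)
    (hR : 0 < R) {K Γ : ℝ≥0∞} (hKt : K ≠ ⊤) (hΓt : Γ ≠ ⊤)
    {u : ℕ → Euc N → ℝ} (hmeas : ∀ n, Measurable (u n))
    (hK : ∀ n, (∫⁻ x, ENNReal.ofReal (|u n x| ^ p)) ≤ K)
    (hΓ : ∀ n, (∫⁻ x, gg N s p (u n) x) ≤ Γ)
    (hvan : Tendsto (fun n => ⨆ y : Euc N,
      ∫⁻ z in Metric.ball y R, ENNReal.ofReal (|u n z| ^ p)) atTop (𝓝 0)) :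
    ∀ k : ℕ, ∀ t : ℝ, p < t → t < Qseq p (s*p/(N:ℝ)) (k+1) →
      Tendsto (fun n => ∫⁻ x, ENNReal.ofReal (|u n x| ^ t)) atTop (𝓝 0) := by
  have hNR : (0:ℝ) < N := by exact_mod_cast hN0
  have hp0 : (0:ℝ) < p := one_pos.trans hp
  set a := s*p/(N:ℝ) with hadef
  have ha0 : 0 < a := by positivity
  have hQge : ∀ k, p ≤ Qseq p a k := by
    intro k
    induction k with
    | zero => exact le_rfl
    | succ k ih =>
      show p ≤ p + a * Qseq p a k
      nlinarith
  intro k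
  induction k with
  | zero =>
    intro t hpt htQ
    apply main_tendsto hN0 hs0 hp hp hR hKt hΓt hmeas hK hΓ hpt _ hvan
    have : Qseq p a 1 = p + a * p := rfl
    rw [this] at htQ
    calc t < p + a * p := htQ
    _ = p + s * p * p / (N:ℝ) := by rw [hadef]; ring
  | succ k ih =>
    intro t hpt htQ
    have hQk1 : p < Qseq p a (k+1) := by
      show p < p + a * Qseq p a k
      nlinarith [hQge k]
    have htQ' : t < p + a * Qseq p a (k+1) := htQ
    set τ := (max ((N:ℝ)*(t-p)/(s*p)) p + Qseq p a (k+1))/2 with hτdef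
    have hmaxlt : max ((N:ℝ)*(t-p)/(s*p)) p < Qseq p a (k+1) := by
      apply max_lt _ hQk1
      rw [div_lt_iff₀ (by positivity)]
      have : (t - p) < a * Qseq p a (k+1) := by linarith
      rw [hadef] at this
      rw [div_mul_eq_mul_div, lt_div_iff₀ hNR] at this
      nlinarith
    have hτlow : max ((N:ℝ)*(t-p)/(s*p)) p < τ := by
      rw [hτdef]; linarith
    have hτhigh : τ < Qseq p a (k+1) := by
      rw [hτdef]; linarith
    have hpτ : p < τ := lt_of_le_of_lt (le_max_right _ _) hτlow
    have hτ1 : 1 < τ := hp.trans hpτ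
    have htendτ := ih τ hpτ hτhigh
    have hvanτ : Tendsto (fun n => ⨆ y : Euc N,
        ∫⁻ z in Metric.ball y R, ENNReal.ofReal (|u n z| ^ τ)) atTop (𝓝 0) := by
      apply tendsto_of_tendsto_of_tendsto_of_le_of_le tendsto_const_nhds htendτ
        (fun n => zero_le)
      intro n
      exact iSup_le fun y => setLIntegral_le_lintegral _ _
    apply main_tendsto hN0 hs0 hp hτ1 hR hKt hΓt hmeas hK hΓ hpt _ hvanτ
    have h5 : (N:ℝ)*(t-p)/(s*p) < τ := lt_of_le_of_lt (le_max_left _ _) hτlow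
    rw [div_lt_iff₀ (by positivity)] at h5
    have h6 : t - p < s * p * τ / (N:ℝ) := by
      rw [lt_div_iff₀ hNR]
      nlinarith
    linarith

/-- Lions-type vanishing lemma (Lemma 2.1). -/
theorem stmt_0 {N : ℕ} {s p : ℝ} (hs0 : 0 < s) (hs1 : s < 1) (hp : 1 < p)
    (hN : s * p < (N : ℝ))
    (u : ℕ → Euc N → ℝ) (hmeas : ∀ n, Measurable (u n))
    (hbdd : (⨆ n, lpP N p (u n) + gagliardoP N s p (u n)) < ⊤)
    (R : ℝ) (hR : 0 < R)
    (hvan : Tendsto (fun n => ⨆ y : Euc N,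
        ∫⁻ x in Metric.ball y R, ENNReal.ofReal (|u n x| ^ p)) atTop (nhds 0)) :
    ∀ t : ℝ, p < t → t < (N : ℝ) * p / ((N : ℝ) - s * p) →
      Tendsto (fun n => eLpNorm (u n) (ENNReal.ofReal t) volume) atTop (nhds 0) := by
  intro t hpt htL
  have hsp0 : (0:ℝ) < s * p := by positivity
  have hNR : (0:ℝ) < N := lt_trans hsp0 hN
  have hN0 : 0 < N := by exact_mod_cast hNR
  set S := ⨆ n, lpP N p (u n) + gagliardoP N s p (u n) with hS
  have hSt : S ≠ ⊤ := hbdd.ne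
  have hK : ∀ n, (∫⁻ x, ENNReal.ofReal (|u n x| ^ p)) ≤ S := by
    intro n
    calc (∫⁻ x, ENNReal.ofReal (|u n x| ^ p)) = lpP N p (u n) := rfl
    _ ≤ lpP N p (u n) + gagliardoP N s p (u n) := self_le_add_right _ _
    _ ≤ S := le_iSup (fun n => lpP N p (u n) + gagliardoP N s p (u n)) n
  have hΓ : ∀ n, (∫⁻ x, gg N s p (u n) x) ≤ S := by
    intro n
    calc (∫⁻ x, gg N s p (u n) x) = gagliardoP N s p (u n) := rfl
    _ ≤ lpP N p (u n) + gagliardoP N s p (u n) := le_add_self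
    _ ≤ S := le_iSup (fun n => lpP N p (u n) + gagliardoP N s p (u n)) n
  set a := s*p/(N:ℝ) with hadef
  have ha0 : 0 < a := by positivity
  have ha1 : a < 1 := (div_lt_one hNR).mpr hN
  set L := (N:ℝ)*p/((N:ℝ) - s*p) with hL
  have hNsp : (0:ℝ) < (N:ℝ) - s*p := by linarith
  have hpL : p < L := by
    rw [hL, lt_div_iff₀ hNsp]
    nlinarith
  have hQfor : ∀ k, Qseq p a k = L - a^k * (L - p) := by
    intro k
    have hLa : p + a * L = L := by
      rw [hL, hadef]
      rw [eq_div_iff hNsp.ne', add_mul, mul_assoc (s*p/(N:ℝ)), div_mul_cancel₀ _ hNsp.ne',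
        div_mul_eq_mul_div, mul_comm (N:ℝ) p, ← mul_assoc, mul_div_assoc, div_self hNR.ne']
      ring
    induction k with
    | zero => show p = L - 1 * (L - p); ring
    | succ k ih =>
      show p + a * Qseq p a k = L - a^(k+1) * (L - p)
      rw [ih]
      ring_nf
      ring_nf at hLa
      nlinarith [hLa]
  have hak := tendsto_pow_atTop_nhds_zero_of_lt_one ha0.le ha1
  have hev : ∀ᶠ k : ℕ in atTop, a^k < (L - t)/(L - p) :=
    hak.eventually_lt_const (div_pos (by linarith) (by linarith))
  obtain ⟨k0, hk0⟩ := Filter.eventually_atTop.mp hev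
  have hkk : t < Qseq p a (k0+1) := by
    rw [hQfor]
    have h7 : a^(k0+1) < (L-t)/(L-p) := hk0 (k0+1) (Nat.le_succ k0)
    rw [lt_div_iff₀ (by linarith : (0:ℝ) < L - p)] at h7
    linarith
  have hboot := bootstrap hN0 hs0 hp hR hSt hSt hmeas hK hΓ hvan k0 t hpt hkk
  have ht0 : (0:ℝ) < t := lt_trans (one_pos.trans hp) hpt
  have heq : ∀ n, eLpNorm (u n) (ENNReal.ofReal t) volume
      = (∫⁻ x, ENNReal.ofReal (|u n x| ^ t)) ^ (1/t) := by
    intro n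
    rw [eLpNorm_eq_lintegral_rpow_enorm_toReal
      (by simp [ENNReal.ofReal_eq_zero, not_le, ht0] : ENNReal.ofReal t ≠ 0)
      ENNReal.ofReal_ne_top]
    rw [ENNReal.toReal_ofReal ht0.le]
    congr 1
    apply lintegral_congr
    intro x
    rw [Real.enorm_eq_ofReal_abs, ENNReal.ofReal_rpow_of_nonneg (abs_nonneg _) ht0.le]
  simp_rw [heq]
  have h2 := (ENNReal.continuous_rpow_const (y := 1/t)).tendsto 0
  rw [ENNReal.zero_rpow_of_pos (by positivity)] at h2
  exact h2.comp hboot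
end
end

section
/- Let s ∈ (0,1), p ∈ (1,∞), N > sp, and let p' = p/(p−1). For a measurable function u : ℝ^N → ℝ define A(u)(x,y) = |u(x)−u(y)|^{p−2}(u(x)−u(y)) / |x−y|^{(N+sp)/p'}. Let w satisfy [w]_{s,p} < ∞ and let (z_n) be a sequence with [z_n]_{s,p} ≤ C for all n and z_n → 0 almost everywhere in ℝ^N. Then ∬_{ℝ^N×ℝ^N} |A(z_n+w)(x,y) − A(z_n)(x,y) − A(w)(x,y)|^{p'} dx dy → 0 as n → ∞. -/
open MeasureTheory Filter Topology
open scoped ENNReal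

noncomputable section

/-- `A(u)(x,y) = |u(x)−u(y)|^{p−2}(u(x)−u(y)) / |x−y|^{(N+sp)/p'}`,
where `(N+sp)/p' = (N+sp)(p−1)/p`. -/
def Aop (N : ℕ) (s p : ℝ) (u : Euc N → ℝ) (x y : Euc N) : ℝ :=
  |u x - u y| ^ (p - 2) * (u x - u y) / ‖x - y‖ ^ (((N : ℝ) + s * p) * (p - 1) / p)

namespace BLhelp

def phi (p t : ℝ) : ℝ := |t| ^ (p - 2) * t

lemma phi_zero (p : ℝ) : phi p 0 = 0 := by simp [phi]

lemma abs_phi {p : ℝ} (hp : 1 < p) (t : ℝ) : |phi p t| = |t| ^ (p - 1) := by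
  rcases eq_or_ne t 0 with rfl | ht
  · simp [phi, Real.zero_rpow (by linarith : p - 1 ≠ 0)]
  · have h0 : (0:ℝ) < |t| := abs_pos.mpr ht
    rw [phi, abs_mul, abs_of_nonneg (Real.rpow_nonneg (abs_nonneg t) _),
      ← Real.rpow_add_one h0.ne']
    congr 1; ring

lemma continuous_phi {p : ℝ} (hp : 1 < p) : Continuous (phi p) := by
  rw [continuous_iff_continuousAt]
  intro t
  rcases eq_or_ne t 0 with rfl | ht
  · have h1 : Tendsto (fun t : ℝ => |t| ^ (p - 1)) (𝓝 0) (𝓝 0) := by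
      have h2 : ContinuousAt (fun x : ℝ => x ^ (p - 1)) 0 :=
        Real.continuousAt_rpow_const 0 (p - 1) (Or.inr (by linarith))
      have h3 := h2.tendsto.comp (by simpa using continuous_abs.tendsto (0:ℝ) :
        Tendsto (fun t : ℝ => |t|) (𝓝 0) (𝓝 0))
      simpa [Function.comp_def, Real.zero_rpow (show p - 1 ≠ 0 by linarith)] using h3
    have h4 : Tendsto (phi p) (𝓝 0) (𝓝 0) :=
      squeeze_zero_norm (fun t => by rw [Real.norm_eq_abs, abs_phi hp]) h1
    simpa [ContinuousAt, phi_zero] using h4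
  · exact (((Real.continuousAt_rpow_const _ _
      (Or.inl (abs_ne_zero.mpr ht))).comp continuous_abs.continuousAt).mul continuousAt_id)

lemma phi_smul {p : ℝ} (hp : 1 < p) {l : ℝ} (hl : 0 < l) (t : ℝ) :
    phi p (l * t) = l ^ (p - 1) * phi p t := by
  unfold phi
  rw [abs_mul, abs_of_pos hl, Real.mul_rpow hl.le (abs_nonneg t)]
  have h : l ^ (p - 2) * l = l ^ (p - 1) := by
    rw [← Real.rpow_add_one hl.ne']; congr 1; ring
  calc l ^ (p-2) * |t| ^ (p-2) * (l * t) = (l ^ (p-2) * l) * (|t| ^ (p-2) * t) := by ring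
  _ = l ^ (p-1) * (|t| ^ (p-2) * t) := by rw [h]

lemma key_ineq {p : ℝ} (hp : 1 < p) {ε : ℝ} (hε : 0 < ε) :
    ∃ c : ℝ, 0 ≤ c ∧ ∀ a b : ℝ,
      |phi p (a + b) - phi p a - phi p b| ≤ ε * |a| ^ (p - 1) + c * |b| ^ (p - 1) := by
  have hp1 : (0:ℝ) < p - 1 := by linarith
  by_contra hcon
  push_neg at hcon
  -- for each n, get a counterexample with c = n
  have hsel : ∀ n : ℕ, ∃ a b : ℝ,
      ε * |a| ^ (p-1) + (n:ℝ) * |b| ^ (p-1) < |phi p (a + b) - phi p a - phi p b| := by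
    intro n
    obtain ⟨a, b, hab⟩ := hcon (n:ℝ) (Nat.cast_nonneg n)
    exact ⟨a, b, hab⟩
  choose A B hAB using hsel
  -- normalization
  have hR : ∀ n, 0 < |A n| ^ (p-1) + |B n| ^ (p-1) := by
    intro n
    rcases eq_or_ne (A n) 0 with hA | hA
    · rcases eq_or_ne (B n) 0 with hB | hB
      · exfalso
        have := hAB n
        rw [hA, hB] at this
        simp [phi_zero, Real.zero_rpow hp1.ne'] at this
      · have : 0 < |B n| ^ (p-1) := Real.rpow_pos_of_pos (abs_pos.mpr hB) _
        positivity
    · have : 0 < |A n| ^ (p-1) := Real.rpow_pos_of_pos (abs_pos.mpr hA) _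
      positivity
  set R : ℕ → ℝ := fun n => |A n| ^ (p-1) + |B n| ^ (p-1) with hRdef
  set T : ℕ → ℝ := fun n => (R n) ^ (1/(p-1)) with hTdef
  have hT : ∀ n, 0 < T n := fun n => Real.rpow_pos_of_pos (hR n) _
  have hTp : ∀ n, (T n) ^ (p-1) = R n := by
    intro n
    rw [hTdef, ← Real.rpow_mul (hR n).le, one_div_mul_cancel hp1.ne', Real.rpow_one]
  set a : ℕ → ℝ := fun n => A n / T n with hadef
  set b : ℕ → ℝ := fun n => B n / T n with hbdef
  have habs : ∀ n, |a n| ^ (p-1) = |A n| ^ (p-1) / R n := by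
    intro n
    rw [hadef]
    simp only
    rw [abs_div, abs_of_pos (hT n), Real.div_rpow (abs_nonneg _) (hT n).le, hTp]
  have hbbs : ∀ n, |b n| ^ (p-1) = |B n| ^ (p-1) / R n := by
    intro n
    rw [hbdef]
    simp only
    rw [abs_div, abs_of_pos (hT n), Real.div_rpow (abs_nonneg _) (hT n).le, hTp]
  have hsum : ∀ n, |a n| ^ (p-1) + |b n| ^ (p-1) = 1 := by
    intro n
    rw [habs, hbbs, ← add_div, div_self (hR n).ne']
  -- scaled inequality
  have hscaled : ∀ n, ε * |a n| ^ (p-1) + (n:ℝ) * |b n| ^ (p-1)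
      < |phi p (a n + b n) - phi p (a n) - phi p (b n)| := by
    intro n
    have h1 : a n + b n = (A n + B n) / T n := by rw [hadef, hbdef]; ring
    have hinv : (0:ℝ) < (T n)⁻¹ := inv_pos.mpr (hT n)
    have hphi : ∀ t : ℝ, phi p (t / T n) = ((T n)⁻¹) ^ (p-1) * phi p t := by
      intro t
      rw [div_eq_inv_mul, phi_smul hp hinv]
    have h2 : |phi p (a n + b n) - phi p (a n) - phi p (b n)|
        = ((T n)⁻¹) ^ (p-1) * |phi p (A n + B n) - phi p (A n) - phi p (B n)| := by
      rw [h1, hadef, hbdef]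
      simp only
      rw [hphi, hphi, hphi, ← mul_sub, ← mul_sub, abs_mul,
        abs_of_nonneg (Real.rpow_nonneg hinv.le _)]
    have h3 : ∀ t : ℝ, |t / T n| ^ (p-1) = ((T n)⁻¹) ^ (p-1) * |t| ^ (p-1) := by
      intro t
      rw [abs_div, abs_of_pos (hT n), div_eq_inv_mul,
        Real.mul_rpow (inv_nonneg.mpr (hT n).le) (abs_nonneg t)]
    have h4 := hAB n
    have h5 : (0:ℝ) < ((T n)⁻¹) ^ (p-1) := Real.rpow_pos_of_pos hinv _
    calc ε * |a n| ^ (p-1) + (n:ℝ) * |b n| ^ (p-1)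
        = ((T n)⁻¹) ^ (p-1) * (ε * |A n| ^ (p-1) + (n:ℝ) * |B n| ^ (p-1)) := by
          rw [hadef, hbdef]; simp only; rw [h3, h3]; ring
      _ < ((T n)⁻¹) ^ (p-1) * |phi p (A n + B n) - phi p (A n) - phi p (B n)| := by
          exact (mul_lt_mul_iff_right₀ h5).mpr h4
      _ = |phi p (a n + b n) - phi p (a n) - phi p (b n)| := h2.symm
  -- bounds
  have hle1 : ∀ n, |a n| ≤ 1 := by
    intro n
    by_contra hgt
    push_neg at hgt
    have h1 : (1:ℝ) < |a n| ^ (p-1) := by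
      calc (1:ℝ) = 1 ^ (p-1) := (Real.one_rpow _).symm
      _ < |a n| ^ (p-1) := Real.rpow_lt_rpow (by norm_num) hgt hp1
    have h2 : |a n| ^ (p-1) ≤ 1 := by
      have := hsum n
      have hb0 : (0:ℝ) ≤ |b n| ^ (p-1) := Real.rpow_nonneg (abs_nonneg _) _
      linarith
    linarith
  -- F is bounded on the normalized sequence
  have hFle : ∀ x y : ℝ, |phi p (x + y) - phi p x - phi p y|
      ≤ |x + y| ^ (p-1) + |x| ^ (p-1) + |y| ^ (p-1) := by
    intro x y
    calc |phi p (x + y) - phi p x - phi p y|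
        ≤ |phi p (x + y)| + |phi p x| + |phi p y| := by
          have := abs_sub (phi p (x+y) - phi p x) (phi p y)
          have := abs_sub (phi p (x+y)) (phi p x)
          calc |phi p (x + y) - phi p x - phi p y|
              ≤ |phi p (x + y) - phi p x| + |phi p y| := abs_sub _ _
          _ ≤ |phi p (x + y)| + |phi p x| + |phi p y| := by
              have := abs_sub (phi p (x+y)) (phi p x); linarith
    _ = |x + y| ^ (p-1) + |x| ^ (p-1) + |y| ^ (p-1) := by
          rw [abs_phi hp, abs_phi hp, abs_phi hp]
  -- b n → 0
  have hble1 : ∀ n, |b n| ≤ 1 := by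
    intro n
    by_contra hgt
    push_neg at hgt
    have h1 : (1:ℝ) < |b n| ^ (p-1) := by
      calc (1:ℝ) = 1 ^ (p-1) := (Real.one_rpow _).symm
      _ < |b n| ^ (p-1) := Real.rpow_lt_rpow (by norm_num) hgt hp1
    have h2 : |b n| ^ (p-1) ≤ 1 := by
      have := hsum n
      have ha0 : (0:ℝ) ≤ |a n| ^ (p-1) := Real.rpow_nonneg (abs_nonneg _) _
      linarith
    linarith
  have hM : ∀ n : ℕ, (n:ℝ) * |b n| ^ (p-1) ≤ 2 ^ (p-1) + 1 + 1 := by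
    intro n
    have h1 := (hscaled n).le
    have h2 := hFle (a n) (b n)
    have h3 : |a n + b n| ^ (p-1) ≤ 2 ^ (p-1) := by
      apply Real.rpow_le_rpow (abs_nonneg _) _ hp1.le
      calc |a n + b n| ≤ |a n| + |b n| := abs_add_le _ _
      _ ≤ 2 := by have := hle1 n; have := hble1 n; linarith
    have h4 : |a n| ^ (p-1) ≤ 1 := by
      calc |a n| ^ (p-1) ≤ 1 ^ (p-1) := Real.rpow_le_rpow (abs_nonneg _) (hle1 n) hp1.le
      _ = 1 := Real.one_rpow _
    have h5 : |b n| ^ (p-1) ≤ 1 := by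
      calc |b n| ^ (p-1) ≤ 1 ^ (p-1) := Real.rpow_le_rpow (abs_nonneg _) (hble1 n) hp1.le
      _ = 1 := Real.one_rpow _
    have hepos : 0 ≤ ε * |a n| ^ (p-1) :=
      mul_nonneg hε.le (Real.rpow_nonneg (abs_nonneg _) _)
    linarith
  have hbp0 : Tendsto (fun n => |b n| ^ (p-1)) atTop (𝓝 0) := by
    have hub : ∀ᶠ n : ℕ in atTop, |b n| ^ (p-1) ≤ (2 ^ (p-1) + 1 + 1) / n := by
      filter_upwards [eventually_gt_atTop 0] with n hn
      have hnp : (0:ℝ) < (n:ℝ) := Nat.cast_pos.mpr hn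
      have := hM n
      rw [le_div_iff₀ hnp]
      linarith [hM n]
    have hlb : ∀ᶠ n : ℕ in atTop, 0 ≤ |b n| ^ (p-1) :=
      Eventually.of_forall fun n => Real.rpow_nonneg (abs_nonneg _) _
    exact squeeze_zero' hlb hub (tendsto_const_div_atTop_nhds_zero_nat (2 ^ (p-1) + 1 + 1))
  have hb0 : Tendsto (fun n => b n) atTop (𝓝 0) := by
    have habs0 : Tendsto (fun n => |b n|) atTop (𝓝 0) := by
      have hrw : ∀ n, (|b n| ^ (p-1)) ^ (p-1)⁻¹ = |b n| := by
        intro n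
        rw [← Real.rpow_mul (abs_nonneg _), mul_inv_cancel₀ hp1.ne', Real.rpow_one]
      have hc : ContinuousAt (fun x : ℝ => x ^ (p-1)⁻¹) 0 :=
        Real.continuousAt_rpow_const 0 _ (Or.inr (by positivity))
      have h := hc.tendsto.comp hbp0
      rw [Real.zero_rpow (by positivity : ((p-1)⁻¹ : ℝ) ≠ 0)] at h
      simpa [Function.comp_def, hrw] using h
    exact squeeze_zero_norm (fun n => le_of_eq (Real.norm_eq_abs _)) habs0
  -- compactness
  have hmem : ∀ n, a n ∈ Set.Icc (-1:ℝ) 1 := fun n => abs_le.mp (hle1 n)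
  obtain ⟨l, hl, σ, hσ, hconv⟩ := isCompact_Icc.tendsto_subseq hmem
  have hbσ : Tendsto (fun k => b (σ k)) atTop (𝓝 0) := hb0.comp hσ.tendsto_atTop
  -- F along subsequence tends to 0
  have hφcont := continuous_phi hp
  have hFconv : Tendsto (fun k => |phi p (a (σ k) + b (σ k)) - phi p (a (σ k)) - phi p (b (σ k))|)
      atTop (𝓝 0) := by
    have h1 : Tendsto (fun k => a (σ k) + b (σ k)) atTop (𝓝 l) := by
      simpa using hconv.add hbσ
    have h2 : Tendsto (fun k => phi p (a (σ k) + b (σ k))) atTop (𝓝 (phi p l)) :=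
      (hφcont.tendsto l).comp h1
    have h3 : Tendsto (fun k => phi p (a (σ k))) atTop (𝓝 (phi p l)) :=
      (hφcont.tendsto l).comp hconv
    have h4 : Tendsto (fun k => phi p (b (σ k))) atTop (𝓝 (phi p 0)) :=
      (hφcont.tendsto 0).comp hbσ
    have h5 := (h2.sub h3).sub h4
    rw [phi_zero] at h5
    have h6 : Tendsto (fun k => phi p (a (σ k) + b (σ k)) - phi p (a (σ k)) - phi p (b (σ k)))
        atTop (𝓝 0) := by simpa using h5
    simpa using h6.abs
  -- |a (σ k)|^(p-1) → 1
  have haσ : Tendsto (fun k => |a (σ k)| ^ (p-1)) atTop (𝓝 (|l| ^ (p-1))) := by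
    have h1 : Tendsto (fun k => |a (σ k)|) atTop (𝓝 |l|) := hconv.abs
    exact ((Real.continuousAt_rpow_const |l| (p-1) (Or.inr hp1.le)).tendsto).comp h1
  have hlim1 : |l| ^ (p-1) = 1 := by
    have h1 : Tendsto (fun k => |a (σ k)| ^ (p-1)) atTop (𝓝 1) := by
      have h2 : ∀ k, |a (σ k)| ^ (p-1) = 1 - |b (σ k)| ^ (p-1) := by
        intro k; have := hsum (σ k); linarith
      have h3 : Tendsto (fun k => |b (σ k)| ^ (p-1)) atTop (𝓝 0) := hbp0.comp hσ.tendsto_atTop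
      have h4 : Tendsto (fun k => 1 - |b (σ k)| ^ (p-1)) atTop (𝓝 (1 - 0)) :=
        tendsto_const_nhds.sub h3
      simpa [← h2] using h4
    exact tendsto_nhds_unique haσ h1
  -- contradiction: ε ≤ 0
  have hfinal : ε * 1 ≤ 0 := by
    have h1 : Tendsto (fun k => ε * |a (σ k)| ^ (p-1)) atTop (𝓝 (ε * 1)) := by
      have h := haσ.const_mul ε; rwa [hlim1] at h
    refine le_of_tendsto_of_tendsto' h1 hFconv ?_
    intro k
    have h2 := (hscaled (σ k)).le
    have h3 : 0 ≤ ((σ k : ℕ):ℝ) * |b (σ k)| ^ (p-1) :=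
      mul_nonneg (Nat.cast_nonneg _) (Real.rpow_nonneg (abs_nonneg _) _)
    linarith
  nlinarith

lemma add_rpow_le {q x y : ℝ} (hq : 0 ≤ q) (hx : 0 ≤ x) (hy : 0 ≤ y) :
    (x + y) ^ q ≤ 2 ^ q * (x ^ q + y ^ q) := by
  have h1 : x + y ≤ 2 * max x y := by
    rcases le_total x y with h | h
    · rw [max_eq_right h]; linarith
    · rw [max_eq_left h]; linarith
  calc (x + y) ^ q ≤ (2 * max x y) ^ q :=
        Real.rpow_le_rpow (by linarith) h1 hq
  _ = 2 ^ q * (max x y) ^ q := Real.mul_rpow (by norm_num) (le_max_of_le_left hx)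
  _ ≤ 2 ^ q * (x ^ q + y ^ q) := by
      have h2 : (max x y) ^ q ≤ x ^ q + y ^ q := by
        rcases le_total x y with h | h
        · rw [max_eq_right h]
          have : (0:ℝ) ≤ x ^ q := Real.rpow_nonneg hx _
          linarith
        · rw [max_eq_left h]
          have : (0:ℝ) ≤ y ^ q := Real.rpow_nonneg hy _
          linarith
      have h3 : (0:ℝ) ≤ 2 ^ q := Real.rpow_nonneg (by norm_num) _
      exact mul_le_mul_of_nonneg_left h2 h3

lemma core {α : Type*} [MeasurableSpace α] {μ : Measure α} {p : ℝ} (hp : 1 < p)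
    (a : ℕ → α → ℝ) (ha : ∀ n, Measurable (a n))
    (b : α → ℝ) (hb : Measurable b)
    (C : ℝ≥0∞) (hC : C < ⊤) (haC : ∀ n, ∫⁻ x, ENNReal.ofReal (|a n x| ^ p) ∂μ ≤ C)
    (hbfin : ∫⁻ x, ENNReal.ofReal (|b x| ^ p) ∂μ < ⊤)
    (ha0 : ∀ᵐ x ∂μ, Tendsto (fun n => a n x) atTop (𝓝 0)) :
    Tendsto (fun n => ∫⁻ x, ENNReal.ofReal
      (|phi p (a n x + b x) - phi p (a n x) - phi p (b x)| ^ (p / (p - 1))) ∂μ)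
      atTop (𝓝 0) := by
  have hp1 : (0:ℝ) < p - 1 := by linarith
  have hp0 : (0:ℝ) < p := by linarith
  set q : ℝ := p / (p - 1) with hqdef
  have hq : 0 < q := div_pos hp0 hp1
  have hpq : (p - 1) * q = p := by rw [hqdef]; field_simp
  have hφcont := continuous_phi hp
  -- measurability of the main integrand pieces
  have hgmeas : ∀ n, Measurable (fun x => |phi p (a n x + b x) - phi p (a n x) - phi p (b x)|) :=
    fun n => (((hφcont.measurable.comp ((ha n).add hb)).sub
      (hφcont.measurable.comp (ha n))).sub (hφcont.measurable.comp hb)).abs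
  rw [ENNReal.tendsto_nhds_zero]
  intro ε hε
  set ε₀ : ℝ≥0∞ := min ε 1 with hε₀def
  have hε₀pos : 0 < ε₀ := lt_min hε zero_lt_one
  have hε₀top : ε₀ ≠ ⊤ :=
    ne_top_of_le_ne_top ENNReal.one_ne_top (min_le_right _ _)
  have hε₀le : ε₀ ≤ ε := min_le_left _ _
  suffices h : ∀ᶠ n in atTop, (∫⁻ x, ENNReal.ofReal
      (|phi p (a n x + b x) - phi p (a n x) - phi p (b x)| ^ q) ∂μ) ≤ ε₀ by
    filter_upwards [h] with n hn
    exact hn.trans hε₀le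
  -- choose δ
  set r : ℝ≥0∞ := ε₀ / 2 / (C + 1) with hrdef
  have hrne : r ≠ 0 := by
    apply ENNReal.div_ne_zero.mpr
    constructor
    · exact (ENNReal.div_pos hε₀pos.ne' (by norm_num)).ne'
    · exact ENNReal.add_ne_top.mpr ⟨hC.ne, ENNReal.one_ne_top⟩
  have hrtop : r ≠ ⊤ := by
    apply ne_of_lt
    apply ENNReal.div_lt_top
    · exact (ENNReal.div_lt_top hε₀top (by norm_num)).ne
    · simp
  have hrtoReal : 0 < r.toReal := ENNReal.toReal_pos hrne hrtop
  set M : ℝ := 2 ^ q with hMdef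
  have hM0 : 0 < M := Real.rpow_pos_of_pos (by norm_num) _
  obtain ⟨δ, hδsmall, hδpos⟩ :
      ∃ δ : ℝ, M * δ ^ q < r.toReal ∧ 0 < δ := by
    have hcont : Tendsto (fun δ : ℝ => M * δ ^ q) (𝓝[>] 0) (𝓝 0) := by
      have h1 : ContinuousAt (fun x : ℝ => x ^ q) 0 :=
        Real.continuousAt_rpow_const 0 q (Or.inr hq.le)
      have h2 := h1.tendsto
      rw [Real.zero_rpow hq.ne'] at h2
      have h3 : Tendsto (fun δ : ℝ => M * δ ^ q) (𝓝 0) (𝓝 (M * 0)) := h2.const_mul M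
      rw [mul_zero] at h3
      exact h3.mono_left nhdsWithin_le_nhds
    have h4 := hcont.eventually_lt_const hrtoReal
    exact (h4.and self_mem_nhdsWithin).exists
  obtain ⟨c, hc0, hkey⟩ := key_ineq hp hδpos
  set K1 : ℝ := M * δ ^ q with hK1def
  set K2 : ℝ := M * c ^ q with hK2def
  have hK1nn : 0 ≤ K1 := le_of_lt (by positivity)
  have hK2nn : 0 ≤ K2 := mul_nonneg hM0.le (Real.rpow_nonneg hc0 _)
  -- pointwise bound
  have hpoint : ∀ x y : ℝ, |phi p (x + y) - phi p x - phi p y| ^ q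
      ≤ K1 * |x| ^ p + K2 * |y| ^ p := by
    intro x y
    have h1 := hkey x y
    have h2 : |phi p (x + y) - phi p x - phi p y| ^ q
        ≤ (δ * |x| ^ (p-1) + c * |y| ^ (p-1)) ^ q :=
      Real.rpow_le_rpow (abs_nonneg _) h1 hq.le
    have hx1 : (0:ℝ) ≤ δ * |x| ^ (p-1) := mul_nonneg hδpos.le (Real.rpow_nonneg (abs_nonneg _) _)
    have hy1 : (0:ℝ) ≤ c * |y| ^ (p-1) := mul_nonneg hc0 (Real.rpow_nonneg (abs_nonneg _) _)
    have h3 := add_rpow_le hq.le hx1 hy1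
    have h4 : (δ * |x| ^ (p-1)) ^ q = δ ^ q * |x| ^ p := by
      rw [Real.mul_rpow hδpos.le (Real.rpow_nonneg (abs_nonneg _) _),
        ← Real.rpow_mul (abs_nonneg x), hpq]
    have h5 : (c * |y| ^ (p-1)) ^ q = c ^ q * |y| ^ p := by
      rw [Real.mul_rpow hc0 (Real.rpow_nonneg (abs_nonneg _) _),
        ← Real.rpow_mul (abs_nonneg y), hpq]
    calc |phi p (x + y) - phi p x - phi p y| ^ q
        ≤ (δ * |x| ^ (p-1) + c * |y| ^ (p-1)) ^ q := h2
    _ ≤ M * ((δ * |x| ^ (p-1)) ^ q + (c * |y| ^ (p-1)) ^ q) := h3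
    _ = K1 * |x| ^ p + K2 * |y| ^ p := by rw [h4, h5, hK1def, hK2def]; ring
  -- the auxiliary functions h n
  set g : ℕ → α → ℝ := fun n x => |phi p (a n x + b x) - phi p (a n x) - phi p (b x)| with hgdef
  set h : ℕ → α → ℝ := fun n x => max (g n x ^ q - K1 * |a n x| ^ p) 0 with hhdef
  have hhnn : ∀ n x, 0 ≤ h n x := fun n x => le_max_right _ _
  have hhle : ∀ n x, h n x ≤ K2 * |b x| ^ p := by
    intro n x
    apply max_le
    · have := hpoint (a n x) (b x)
      linarith [this]
    · exact mul_nonneg hK2nn (Real.rpow_nonneg (abs_nonneg _) _)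
  have hgle : ∀ n x, g n x ^ q ≤ h n x + K1 * |a n x| ^ p := by
    intro n x
    have h1 : g n x ^ q - K1 * |a n x| ^ p ≤ h n x := le_max_left _ _
    linarith
  have hhmeas : ∀ n, Measurable (h n) := by
    intro n
    apply Measurable.max _ measurable_const
    exact ((hgmeas n).pow measurable_const).sub
      (measurable_const.mul ((ha n).abs.pow measurable_const))
  -- dominated convergence for h
  have hdct : Tendsto (fun n => ∫⁻ x, ENNReal.ofReal (h n x) ∂μ) atTop (𝓝 0) := by
    have h0 : (0:ℝ≥0∞) = ∫⁻ _x, (0:ℝ≥0∞) ∂μ := by simp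
    rw [h0]
    apply tendsto_lintegral_of_dominated_convergence
      (bound := fun x => ENNReal.ofReal (K2 * |b x| ^ p))
    · exact fun n => (hhmeas n).ennreal_ofReal
    · intro n
      apply Eventually.of_forall
      intro x
      exact ENNReal.ofReal_le_ofReal (hhle n x)
    · have heq : (fun x => ENNReal.ofReal (K2 * |b x| ^ p))
          = fun x => ENNReal.ofReal K2 * ENNReal.ofReal (|b x| ^ p) := by
        funext x
        rw [ENNReal.ofReal_mul hK2nn]
      rw [heq, lintegral_const_mul _ (hb.abs.pow measurable_const).ennreal_ofReal]
      exact ENNReal.mul_ne_top ENNReal.ofReal_ne_top hbfin.ne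
    · filter_upwards [ha0] with x hx
      have h1 : Tendsto (fun n => a n x + b x) atTop (𝓝 (b x)) := by
        simpa using hx.add_const (b x)
      have h2 : Tendsto (fun n => phi p (a n x + b x)) atTop (𝓝 (phi p (b x))) :=
        (hφcont.tendsto _).comp h1
      have h3 : Tendsto (fun n => phi p (a n x)) atTop (𝓝 (phi p 0)) :=
        (hφcont.tendsto _).comp hx
      have h4 : Tendsto (fun n => g n x) atTop (𝓝 0) := by
        have h5 := (h2.sub h3).sub_const (phi p (b x))
        rw [phi_zero] at h5
        have h6 : Tendsto (fun n => phi p (a n x + b x) - phi p (a n x) - phi p (b x))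
            atTop (𝓝 0) := by simpa using h5
        simpa using h6.abs
      have h7 : Tendsto (fun n => g n x ^ q) atTop (𝓝 0) := by
        have hc : ContinuousAt (fun t : ℝ => t ^ q) 0 :=
          Real.continuousAt_rpow_const 0 q (Or.inr hq.le)
        have h8 := hc.tendsto.comp h4
        rw [Real.zero_rpow hq.ne'] at h8
        exact h8
      have h9 : Tendsto (fun n => |a n x| ^ p) atTop (𝓝 0) := by
        have hc : ContinuousAt (fun t : ℝ => t ^ p) 0 :=
          Real.continuousAt_rpow_const 0 p (Or.inr hp0.le)
        have habs : Tendsto (fun n => |a n x|) atTop (𝓝 (0:ℝ)) := by simpa using hx.abs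
        have h10 := hc.tendsto.comp habs
        rw [Real.zero_rpow hp0.ne'] at h10
        exact h10
      have h11 : Tendsto (fun n => h n x) atTop (𝓝 0) := by
        have h12 := (h7.sub (h9.const_mul K1)).max (tendsto_const_nhds (x := (0:ℝ)))
        simpa using h12
      have h13 := (ENNReal.continuous_ofReal.tendsto 0).comp h11
      simpa [Function.comp_def] using h13
  -- conclude
  have hhalf : (0:ℝ≥0∞) < ε₀ / 2 := ENNReal.div_pos hε₀pos.ne' (by norm_num)
  filter_upwards [hdct.eventually_le_const hhalf] with n hn
  have hterm2 : ∫⁻ x, ENNReal.ofReal (K1 * |a n x| ^ p) ∂μ ≤ ε₀ / 2 := by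
    have heq : (fun x => ENNReal.ofReal (K1 * |a n x| ^ p))
        = fun x => ENNReal.ofReal K1 * ENNReal.ofReal (|a n x| ^ p) := by
      funext x; rw [ENNReal.ofReal_mul hK1nn]
    rw [heq, lintegral_const_mul _ ((ha n).abs.pow measurable_const).ennreal_ofReal]
    have h1 : ENNReal.ofReal K1 ≤ r := by
      rw [← ENNReal.ofReal_toReal hrtop]
      exact ENNReal.ofReal_le_ofReal hδsmall.le
    calc ENNReal.ofReal K1 * ∫⁻ x, ENNReal.ofReal (|a n x| ^ p) ∂μ
        ≤ r * C := mul_le_mul' h1 (haC n)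
    _ ≤ r * (C + 1) := mul_le_mul_right le_self_add _
    _ = ε₀ / 2 := by
        rw [hrdef]
        exact ENNReal.div_mul_cancel (by simp) (ENNReal.add_ne_top.mpr ⟨hC.ne, ENNReal.one_ne_top⟩)
  calc ∫⁻ x, ENNReal.ofReal (g n x ^ q) ∂μ
      ≤ ∫⁻ x, (ENNReal.ofReal (h n x) + ENNReal.ofReal (K1 * |a n x| ^ p)) ∂μ := by
        apply lintegral_mono
        intro x
        exact le_trans (ENNReal.ofReal_le_ofReal (hgle n x))
          (le_of_eq (ENNReal.ofReal_add (hhnn n x)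
            (mul_nonneg hK1nn (Real.rpow_nonneg (abs_nonneg _) _))))
    _ = (∫⁻ x, ENNReal.ofReal (h n x) ∂μ) + ∫⁻ x, ENNReal.ofReal (K1 * |a n x| ^ p) ∂μ :=
        lintegral_add_left (hhmeas n).ennreal_ofReal _
    _ ≤ ε₀ / 2 + ε₀ / 2 := add_le_add hn hterm2
    _ = ε₀ := ENNReal.add_halves _

end BLhelp

/-- Brezis–Lieb type splitting for the operator part (Lemma 2.3). -/
theorem stmt_3 {N : ℕ} {s p : ℝ} (hs0 : 0 < s) (hs1 : s < 1) (hp : 1 < p)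
    (hN : s * p < (N : ℝ))
    (w : Euc N → ℝ) (hwmeas : Measurable w) (hwfin : gagliardoP N s p w < ⊤)
    (z : ℕ → Euc N → ℝ) (hzmeas : ∀ n, Measurable (z n))
    (C : ℝ≥0∞) (hC : C < ⊤) (hzbd : ∀ n, gagliardoP N s p (z n) ≤ C)
    (hz0 : ∀ᵐ x : Euc N ∂volume, Tendsto (fun n => z n x) atTop (nhds 0)) :
    Tendsto (fun n => ∫⁻ x : Euc N, ∫⁻ y : Euc N,
        ENNReal.ofReal (|Aop N s p (fun t => z n t + w t) x y
            - Aop N s p (z n) x y - Aop N s p w x y| ^ (p / (p - 1))))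
      atTop (nhds 0) := by
  have hp0 : (0:ℝ) < p := by linarith
  have hp1 : (0:ℝ) < p - 1 := by linarith
  set k : ℝ := ((N:ℝ) + s * p) / p with hkdef
  have hsp : (0:ℝ) < s * p := mul_pos hs0 hp0
  have hNsp : (0:ℝ) < (N:ℝ) + s * p := by
    have : (0:ℝ) ≤ (N:ℝ) := Nat.cast_nonneg N
    linarith
  have hk : 0 < k := div_pos hNsp hp0
  set μ : Measure (Euc N) := volume with hμdef
  set D : (Euc N → ℝ) → (Euc N × Euc N) → ℝ :=
    fun u z => (u z.1 - u z.2) / ‖z.1 - z.2‖ ^ k with hDdef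
  have hDmeas : ∀ u : Euc N → ℝ, Measurable u → Measurable (D u) := by
    intro u hu
    apply Measurable.div
    · exact (hu.comp measurable_fst).sub (hu.comp measurable_snd)
    · exact (measurable_fst.sub measurable_snd).norm.pow measurable_const
  -- pointwise identification of `Aop` with `phi ∘ D`
  have hAop : ∀ (u : Euc N → ℝ) (x y : Euc N),
      Aop N s p u x y = BLhelp.phi p (D u (x, y)) := by
    intro u x y
    have hd0 : (0:ℝ) ≤ ‖x - y‖ := norm_nonneg _
    rcases eq_or_lt_of_le hd0 with hd | hd
    · have h1 : ‖x - y‖ ^ k = 0 := by rw [← hd, Real.zero_rpow hk.ne']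
      have hexp : (0:ℝ) < ((N:ℝ) + s * p) * (p - 1) / p := by positivity
      have h2 : ‖x - y‖ ^ (((N:ℝ) + s * p) * (p - 1) / p) = 0 := by
        rw [← hd, Real.zero_rpow hexp.ne']
      simp [Aop, BLhelp.phi, hDdef, h1, h2]
    · have hdk : (0:ℝ) < ‖x - y‖ ^ k := Real.rpow_pos_of_pos hd _
      rw [hDdef, BLhelp.phi]
      simp only
      rw [abs_div, abs_of_nonneg hdk.le, Real.div_rpow (abs_nonneg _) hdk.le,
        div_mul_div_comm, ← Real.rpow_mul hd0, ← Real.rpow_add hd,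
        show k * (p - 2) + k = ((N:ℝ) + s * p) * (p - 1) / p by
          rw [hkdef]; field_simp; ring]
      rfl
  -- pointwise identification of the Gagliardo integrand
  have hDabs : ∀ (u : Euc N → ℝ) (x y : Euc N),
      |D u (x, y)| ^ p = |u x - u y| ^ p / ‖x - y‖ ^ ((N:ℝ) + s * p) := by
    intro u x y
    have hd0 : (0:ℝ) ≤ ‖x - y‖ := norm_nonneg _
    have hdk : (0:ℝ) ≤ ‖x - y‖ ^ k := Real.rpow_nonneg hd0 _
    rw [hDdef]
    simp only
    rw [abs_div, abs_of_nonneg hdk, Real.div_rpow (abs_nonneg _) hdk,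
      ← Real.rpow_mul hd0, show k * p = (N:ℝ) + s * p by rw [hkdef]; field_simp]
  have hGag : ∀ u : Euc N → ℝ, Measurable u →
      gagliardoP N s p u = ∫⁻ z : Euc N × Euc N, ENNReal.ofReal (|D u z| ^ p) ∂(μ.prod μ) := by
    intro u hu
    rw [MeasureTheory.lintegral_prod _ (((hDmeas u hu).abs.pow measurable_const).ennreal_ofReal).aemeasurable]
    unfold gagliardoP
    apply lintegral_congr
    intro x
    apply lintegral_congr
    intro y
    rw [hDabs u x y]
  -- a.e. convergence on the product space
  have hT := ae_iff.mp hz0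
  have hae : ∀ᵐ pr : Euc N × Euc N ∂(μ.prod μ),
      Tendsto (fun n => z n pr.1) atTop (𝓝 0) ∧ Tendsto (fun n => z n pr.2) atTop (𝓝 0) := by
    rw [ae_iff]
    apply measure_mono_null
      (t := ({x : Euc N | ¬ Tendsto (fun n => z n x) atTop (𝓝 0)} ×ˢ Set.univ)
        ∪ (Set.univ ×ˢ {x : Euc N | ¬ Tendsto (fun n => z n x) atTop (𝓝 0)}))
    · intro pr hpr
      simp only [Set.mem_setOf_eq, not_and_or] at hpr
      rcases hpr with h | h
      · exact Or.inl ⟨h, Set.mem_univ _⟩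
      · exact Or.inr ⟨Set.mem_univ _, h⟩
    · apply measure_union_null
      · rw [Measure.prod_prod, hT, zero_mul]
      · rw [Measure.prod_prod, hT, mul_zero]
  have ha0 : ∀ᵐ pr : Euc N × Euc N ∂(μ.prod μ),
      Tendsto (fun n => D (z n) pr) atTop (𝓝 0) := by
    filter_upwards [hae] with pr hpr
    obtain ⟨h1, h2⟩ := hpr
    have h3 : Tendsto (fun n => (z n pr.1 - z n pr.2) / ‖pr.1 - pr.2‖ ^ k) atTop
        (𝓝 ((0 - 0) / ‖pr.1 - pr.2‖ ^ k)) := (h1.sub h2).div_const _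
    simpa [hDdef] using h3
  -- apply the core lemma
  have haC : ∀ n, ∫⁻ z' : Euc N × Euc N, ENNReal.ofReal (|D (z n) z'| ^ p) ∂(μ.prod μ) ≤ C := by
    intro n
    rw [← hGag _ (hzmeas n)]
    exact hzbd n
  have hbfin : ∫⁻ z' : Euc N × Euc N, ENNReal.ofReal (|D w z'| ^ p) ∂(μ.prod μ) < ⊤ := by
    rw [← hGag _ hwmeas]
    exact hwfin
  have hcore := BLhelp.core hp (fun n => D (z n)) (fun n => hDmeas _ (hzmeas n))
    (D w) (hDmeas _ hwmeas) C hC haC hbfin ha0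
  refine Filter.Tendsto.congr (fun n => ?_) hcore
  have hphimeas : Measurable (fun z' : Euc N × Euc N => ENNReal.ofReal
      (|BLhelp.phi p (D (z n) z' + D w z') - BLhelp.phi p (D (z n) z')
        - BLhelp.phi p (D w z')| ^ (p / (p - 1)))) := by
    have hc := (BLhelp.continuous_phi hp).measurable
    exact ((((hc.comp ((hDmeas _ (hzmeas n)).add (hDmeas _ hwmeas))).sub
      (hc.comp (hDmeas _ (hzmeas n)))).sub (hc.comp (hDmeas _ hwmeas))).abs.pow
        measurable_const).ennreal_ofReal
  rw [MeasureTheory.lintegral_prod _ hphimeas.aemeasurable]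
  apply lintegral_congr
  intro x
  apply lintegral_congr
  intro y
  have hadd : D (fun t => z n t + w t) (x, y) = D (z n) (x, y) + D w (x, y) := by
    rw [hDdef]
    simp only
    rw [← add_div]
    congr 1
    ring
  rw [hAop, hAop, hAop, hadd]
end
end

section
/- Let s ∈ (0,1), p ∈ (1,∞), N > sp, let V : ℝ^N → ℝ be continuous with inf_{ℝ^N} V > 0, and fix ε > 0. Let (u_n) be a sequence with sup_n ‖u_n‖_ε < ∞ and u_n → u almost everywhere in ℝ^N, where ‖u‖_ε < ∞. Then ‖u_n − u‖_ε^p = ‖u_n‖_ε^p − ‖u‖_ε^p + o(1) as n → ∞. -/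
open MeasureTheory Filter Topology
open scoped ENNReal

noncomputable section

/-- The `p`-th power of the norm `‖u‖_ε^p = [u]_{s,p}^p + ∫ V(εx)|u|^p dx`. -/
def normEpsP (N : ℕ) (s p ε : ℝ) (V : Euc N → ℝ) (u : Euc N → ℝ) : ℝ≥0∞ :=
  gagliardoP N s p u + ∫⁻ x : Euc N, ENNReal.ofReal (V (ε • x) * |u x| ^ p)

section Aux

private lemma rpow_sub_one_mul {p : ℝ} (hp : 0 < p) {x : ℝ} (hx : 0 ≤ x) :
    x ^ (p - 1) * x = x ^ p := by
  rcases hx.eq_or_lt with h | h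
  · simp [← h, Real.zero_rpow hp.ne']
  · nth_rewrite 2 [← Real.rpow_one x]
    rw [← Real.rpow_add h, sub_add_cancel]

private lemma rpow_sub_rpow_le {p : ℝ} (hp : 1 ≤ p) {x y : ℝ} (hy : 0 ≤ y) (hxy : y ≤ x) :
    x ^ p - y ^ p ≤ p * x ^ (p - 1) * (x - y) := by
  rcases (hy.trans hxy).eq_or_lt with hx | hx
  · have hy0 : y = 0 := le_antisymm (hx ▸ hxy) hy
    have hx0 : x = 0 := hx.symm
    simp [hx0, hy0, Real.zero_rpow (by positivity : p ≠ 0)]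
  · have hb : (-1 : ℝ) ≤ y / x - 1 := by
      have : 0 ≤ y / x := div_nonneg hy hx.le
      linarith
    have h := one_add_mul_self_le_rpow_one_add hb hp
    rw [show (1 : ℝ) + (y / x - 1) = y / x by ring] at h
    have hxp : 0 < x ^ p := Real.rpow_pos_of_pos hx p
    have key : x ^ p + x ^ p * (p * (y / x - 1)) ≤ y ^ p := by
      have h2 := mul_le_mul_of_nonneg_left h hxp.le
      rw [Real.div_rpow hy hx.le, mul_div_cancel₀ _ hxp.ne'] at h2
      linarith [h2]
    have hxp1 : x ^ (p - 1) = x ^ p / x := by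
      rw [Real.rpow_sub hx, Real.rpow_one]
    rw [hxp1]
    have e : p * (x ^ p / x) * (x - y) = -(x ^ p * (p * (y / x - 1))) := by
      field_simp
      ring
    rw [e]
    linarith [key]

private lemma rpow_diff_aux {p : ℝ} (hp : 1 ≤ p) {x y M d : ℝ} (hx : 0 ≤ x) (hy : 0 ≤ y)
    (hxM : x ≤ M) (hd : x - y ≤ d) (hd0 : 0 ≤ d) :
    x ^ p - y ^ p ≤ p * M ^ (p - 1) * d := by
  have hM : 0 ≤ M := hx.trans hxM
  rcases le_or_gt y x with h | h
  · calc x ^ p - y ^ p ≤ p * x ^ (p - 1) * (x - y) := rpow_sub_rpow_le hp hy h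
      _ ≤ p * M ^ (p - 1) * d := by
        have h1 : x ^ (p - 1) ≤ M ^ (p - 1) := Real.rpow_le_rpow hx hxM (by linarith)
        have h2 : 0 ≤ x - y := by linarith
        have hp0 : (0:ℝ) ≤ p := by linarith
        exact mul_le_mul (mul_le_mul_of_nonneg_left h1 hp0) hd h2 (by positivity)
  · have h3 : x ^ p ≤ y ^ p := Real.rpow_le_rpow hx h.le (by linarith)
    have hR : 0 ≤ p * M ^ (p - 1) * d := by positivity
    linarith

private lemma abs_rpow_sub_le {p : ℝ} (hp : 1 ≤ p) (a b : ℝ) :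
    |(|a + b| ^ p - |a| ^ p)| ≤ p * (|a| + |b|) ^ (p - 1) * |b| := by
  rw [abs_sub_le_iff]
  constructor
  · exact rpow_diff_aux hp (abs_nonneg _) (abs_nonneg _) (abs_add_le a b)
      (by have := abs_abs_sub_abs_le_abs_sub (a + b) a; simp at this; linarith [le_abs_self (|a+b| - |a|)]) (abs_nonneg b)
  · refine rpow_diff_aux hp (abs_nonneg _) (abs_nonneg _) (by linarith [abs_nonneg b]) ?_ (abs_nonneg b)
    have h5 := abs_abs_sub_abs_le_abs_sub a (a + b)
    rw [show a - (a + b) = -b by ring, abs_neg] at h5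
    linarith [le_abs_self (|a| - |a+b|)]

private lemma key_ineq {p : ℝ} (hp : 1 < p) {ε : ℝ} (hε : 0 < ε) :
    ∃ C : ℝ, 0 ≤ C ∧ ∀ a b : ℝ,
      |(|a + b| ^ p - |a| ^ p)| ≤ ε * |a| ^ p + C * |b| ^ p := by
  have hp1 : 1 ≤ p := hp.le
  have hp0 : 0 < p := by linarith
  set δ : ℝ := min 1 (ε / (p * 2 ^ (p - 1))) with hδdef
  have h2p : (0:ℝ) < 2 ^ (p - 1) := Real.rpow_pos_of_pos (by norm_num) _
  have hδ0 : 0 < δ := lt_min one_pos (by positivity)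
  have hδ1 : δ ≤ 1 := min_le_left _ _
  have hδε : p * 2 ^ (p - 1) * δ ≤ ε := by
    have : δ ≤ ε / (p * 2 ^ (p - 1)) := min_le_right _ _
    rw [le_div_iff₀ (by positivity)] at this
    linarith
  refine ⟨p * (1 / δ + 1) ^ (p - 1), by positivity, fun a b => ?_⟩
  have base := abs_rpow_sub_le hp1 a b
  rcases le_or_gt |b| (δ * |a|) with hb | hb
  · -- small b
    have hA : 0 ≤ |a| := abs_nonneg a
    have h1 : |a| + |b| ≤ (1 + δ) * |a| := by nlinarith
    have h2 : ((|a| + |b|)) ^ (p - 1) ≤ ((1 + δ) * |a|) ^ (p - 1) :=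
      Real.rpow_le_rpow (by positivity) h1 (by linarith)
    have h3 : ((1 + δ) * |a|) ^ (p - 1) = (1 + δ) ^ (p - 1) * |a| ^ (p - 1) :=
      Real.mul_rpow (by positivity) hA
    have h4 : (1 + δ) ^ (p - 1) ≤ 2 ^ (p - 1) :=
      Real.rpow_le_rpow (by positivity) (by linarith) (by linarith)
    have h5 : |a| ^ (p - 1) * |a| = |a| ^ p := rpow_sub_one_mul hp0 hA
    have hap : (0:ℝ) ≤ |a| ^ (p - 1) := Real.rpow_nonneg hA _
    have hC0 : (0:ℝ) ≤ p * (1 / δ + 1) ^ (p - 1) * |b| ^ p := by positivity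
    calc |(|a + b| ^ p - |a| ^ p)| ≤ p * (|a| + |b|) ^ (p - 1) * |b| := base
      _ ≤ p * ((1 + δ) ^ (p - 1) * |a| ^ (p - 1)) * (δ * |a|) := by
          have := mul_le_mul (mul_le_mul_of_nonneg_left (h2.trans_eq h3) hp0.le) hb
            (abs_nonneg b) (by positivity)
          exact this
      _ ≤ p * (2 ^ (p - 1) * |a| ^ (p - 1)) * (δ * |a|) := by
          have : (1 + δ) ^ (p - 1) * |a| ^ (p - 1) ≤ 2 ^ (p - 1) * |a| ^ (p - 1) :=
            mul_le_mul_of_nonneg_right h4 hap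
          exact mul_le_mul_of_nonneg_right (mul_le_mul_of_nonneg_left this hp0.le)
            (by positivity)
      _ = p * 2 ^ (p - 1) * δ * (|a| ^ (p - 1) * |a|) := by ring
      _ ≤ ε * |a| ^ p := by rw [h5]; exact mul_le_mul_of_nonneg_right hδε (Real.rpow_nonneg hA p)
      _ ≤ ε * |a| ^ p + p * (1 / δ + 1) ^ (p - 1) * |b| ^ p := by linarith
  · -- large b
    have hB : 0 ≤ |b| := abs_nonneg b
    have ha : |a| ≤ (1 / δ) * |b| := by
      rw [div_mul_eq_mul_div, le_div_iff₀ hδ0]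
      nlinarith [hb.le]
    have h1 : |a| + |b| ≤ (1 / δ + 1) * |b| := by nlinarith
    have h2 : (|a| + |b|) ^ (p - 1) ≤ ((1 / δ + 1) * |b|) ^ (p - 1) :=
      Real.rpow_le_rpow (by positivity) h1 (by linarith)
    have h3 : ((1 / δ + 1) * |b|) ^ (p - 1) = (1 / δ + 1) ^ (p - 1) * |b| ^ (p - 1) :=
      Real.mul_rpow (by positivity) hB
    have h5 : |b| ^ (p - 1) * |b| = |b| ^ p := rpow_sub_one_mul hp0 hB
    have hεa : (0:ℝ) ≤ ε * |a| ^ p := by positivity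
    calc |(|a + b| ^ p - |a| ^ p)| ≤ p * (|a| + |b|) ^ (p - 1) * |b| := base
      _ ≤ p * ((1 / δ + 1) ^ (p - 1) * |b| ^ (p - 1)) * |b| := by
          have := mul_le_mul_of_nonneg_left (h2.trans_eq h3) hp0.le
          exact mul_le_mul_of_nonneg_right this hB
      _ = p * (1 / δ + 1) ^ (p - 1) * |b| ^ p := by rw [mul_assoc, mul_assoc, h5]; ring
      _ ≤ ε * |a| ^ p + p * (1 / δ + 1) ^ (p - 1) * |b| ^ p := by linarith

private lemma diff_rpow_le {p : ℝ} (hp : 1 ≤ p) (a b : ℝ) :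
    |a - b| ^ p ≤ 2 ^ p * (|a| ^ p + |b| ^ p) := by
  have hp0 : (0:ℝ) ≤ p := by linarith
  have h1 : |a - b| ≤ 2 * max |a| |b| := by
    have := abs_sub a b
    rcases le_total |a| |b| with h | h
    · simp [max_eq_right h]; linarith [abs_sub_abs_le_abs_sub a b, abs_sub a b]
    · simp [max_eq_left h]; linarith [abs_sub a b]
  calc |a - b| ^ p ≤ (2 * max |a| |b|) ^ p :=
        Real.rpow_le_rpow (abs_nonneg _) h1 hp0
    _ = 2 ^ p * (max |a| |b|) ^ p := Real.mul_rpow (by norm_num) (le_max_iff.2 (Or.inl (abs_nonneg a)))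
    _ ≤ 2 ^ p * (|a| ^ p + |b| ^ p) := by
        have : (max |a| |b|) ^ p ≤ |a| ^ p + |b| ^ p := by
          rcases le_total |a| |b| with h | h
          · rw [max_eq_right h]; nlinarith [Real.rpow_nonneg (abs_nonneg a) p]
          · rw [max_eq_left h]; nlinarith [Real.rpow_nonneg (abs_nonneg b) p]
        nlinarith [Real.rpow_pos_of_pos (by norm_num : (0:ℝ) < 2) p]

section BL
variable {α : Type*} [MeasurableSpace α] {μ : Measure α}

private lemma integrable_of_lint {φ : α → ℝ} (hm : AEMeasurable φ μ) (h0 : ∀ x, 0 ≤ φ x)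
    (hfin : (∫⁻ x, ENNReal.ofReal (φ x) ∂μ) ≠ ⊤) : Integrable φ μ :=
  ⟨hm.aestronglyMeasurable,
    (hasFiniteIntegral_iff_ofReal (ae_of_all _ h0)).2 (lt_top_iff_ne_top.2 hfin)⟩

private lemma integral_eq_lint {φ : α → ℝ} (hm : AEMeasurable φ μ) (h0 : ∀ x, 0 ≤ φ x) :
    ∫ x, φ x ∂μ = (∫⁻ x, ENNReal.ofReal (φ x) ∂μ).toReal :=
  integral_eq_lintegral_of_nonneg_ae (ae_of_all _ h0) hm.aestronglyMeasurable

private lemma brezis_lieb {p : ℝ} (hp : 1 < p)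
    (f : ℕ → α → ℝ) (hf : ∀ n, AEMeasurable (f n) μ)
    (g : α → ℝ) (hg : AEMeasurable g μ)
    (C : ℝ≥0∞) (hC : C ≠ ⊤)
    (hfC : ∀ n, (∫⁻ x, ENNReal.ofReal (|f n x| ^ p) ∂μ) ≤ C)
    (hgfin : (∫⁻ x, ENNReal.ofReal (|g x| ^ p) ∂μ) ≠ ⊤)
    (hae : ∀ᵐ x ∂μ, Tendsto (fun n => f n x) atTop (𝓝 (g x))) :
    Tendsto (fun n => (∫⁻ x, ENNReal.ofReal (|f n x - g x| ^ p) ∂μ).toReal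
      - ((∫⁻ x, ENNReal.ofReal (|f n x| ^ p) ∂μ).toReal
        - (∫⁻ x, ENNReal.ofReal (|g x| ^ p) ∂μ).toReal)) atTop (𝓝 0) := by
  have hp1 : 1 ≤ p := hp.le
  have hp0 : 0 < p := lt_trans one_pos hp
  have hcontp : Continuous fun t : ℝ => |t| ^ p := by
    rw [continuous_iff_continuousAt]
    intro t
    exact (Real.continuousAt_rpow_const _ _ (Or.inr hp0.le)).comp continuous_abs.continuousAt
  set φ' : ℕ → α → ℝ := fun n x => |f n x - g x| ^ p with hφ'def
  set φ : ℕ → α → ℝ := fun n x => |f n x| ^ p with hφdef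
  set ψ : α → ℝ := fun x => |g x| ^ p with hψdef
  have hφ'm : ∀ n, AEMeasurable (φ' n) μ := fun n => hcontp.measurable.comp_aemeasurable ((hf n).sub hg)
  have hφm : ∀ n, AEMeasurable (φ n) μ := fun n => hcontp.measurable.comp_aemeasurable (hf n)
  have hψm : AEMeasurable ψ μ := hcontp.measurable.comp_aemeasurable hg
  have hφ'0 : ∀ n x, 0 ≤ φ' n x := fun n x => Real.rpow_nonneg (abs_nonneg _) _
  have hφ0 : ∀ n x, 0 ≤ φ n x := fun n x => Real.rpow_nonneg (abs_nonneg _) _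
  have hψ0 : ∀ x, 0 ≤ ψ x := fun x => Real.rpow_nonneg (abs_nonneg _) _
  set A : ℕ → ℝ≥0∞ := fun n => ∫⁻ x, ENNReal.ofReal (φ' n x) ∂μ with hAdef
  set B : ℕ → ℝ≥0∞ := fun n => ∫⁻ x, ENNReal.ofReal (φ n x) ∂μ with hBdef
  set Cg : ℝ≥0∞ := ∫⁻ x, ENNReal.ofReal (ψ x) ∂μ with hCgdef
  -- bound on A
  set M : ℝ≥0∞ := ENNReal.ofReal (2 ^ p) * (C + Cg) with hMdef
  have hM : M ≠ ⊤ := ENNReal.mul_ne_top ENNReal.ofReal_ne_top (ENNReal.add_ne_top.2 ⟨hC, hgfin⟩)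
  have hAM : ∀ n, A n ≤ M := by
    intro n
    have step : ∀ x, ENNReal.ofReal (φ' n x) ≤
        ENNReal.ofReal (2 ^ p) * (ENNReal.ofReal (φ n x) + ENNReal.ofReal (ψ x)) := by
      intro x
      rw [← ENNReal.ofReal_add (hφ0 n x) (hψ0 x), ← ENNReal.ofReal_mul (by positivity)]
      exact ENNReal.ofReal_le_ofReal (diff_rpow_le hp1 _ _)
    calc A n ≤ ∫⁻ x, ENNReal.ofReal (2 ^ p) *
          (ENNReal.ofReal (φ n x) + ENNReal.ofReal (ψ x)) ∂μ := lintegral_mono step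
      _ = ENNReal.ofReal (2 ^ p) * (B n + Cg) := by
          have hofm : AEMeasurable (fun x => ENNReal.ofReal (φ n x)) μ :=
            ENNReal.measurable_ofReal.comp_aemeasurable (hφm n)
          rw [lintegral_const_mul' _ _ ENNReal.ofReal_ne_top,
            lintegral_add_left' hofm]
      _ ≤ M := mul_le_mul_right (add_le_add_left (hfC n) _) _
  have hAfin : ∀ n, A n ≠ ⊤ := fun n => (lt_of_le_of_lt (hAM n) (lt_top_iff_ne_top.2 hM)).ne
  have hBfin : ∀ n, B n ≠ ⊤ := fun n => (lt_of_le_of_lt (hfC n) (lt_top_iff_ne_top.2 hC)).ne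
  -- integrability
  have intφ' : ∀ n, Integrable (φ' n) μ := fun n =>
    integrable_of_lint (hφ'm n) (hφ'0 n) (hAfin n)
  have intφ : ∀ n, Integrable (φ n) μ := fun n =>
    integrable_of_lint (hφm n) (hφ0 n) (hBfin n)
  have intψ : Integrable ψ μ := integrable_of_lint hψm hψ0 hgfin
  have eqA : ∀ n, ∫ x, φ' n x ∂μ = (A n).toReal := fun n => integral_eq_lint (hφ'm n) (hφ'0 n)
  have eqB : ∀ n, ∫ x, φ n x ∂μ = (B n).toReal := fun n => integral_eq_lint (hφm n) (hφ0 n)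
  have eqC : ∫ x, ψ x ∂μ = Cg.toReal := integral_eq_lint hψm hψ0
  have hexpr : ∀ n, (A n).toReal - ((B n).toReal - Cg.toReal)
      = ∫ x, (φ' n x - φ n x + ψ x) ∂μ := by
    intro n
    have hsub : Integrable (fun x => φ' n x - φ n x) μ := (intφ' n).sub (intφ n)
    rw [integral_add hsub intψ, integral_sub (intφ' n) (intφ n), eqA n, eqB n, eqC]
    ring
  rw [NormedAddCommGroup.tendsto_nhds_zero]
  intro η hη
  set ε : ℝ := η / (2 * (M.toReal + 1)) with hεdef
  have hMt0 : 0 ≤ M.toReal := ENNReal.toReal_nonneg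
  have hε : 0 < ε := by positivity
  obtain ⟨C₀, hC₀, hkey⟩ := key_ineq hp hε
  -- pointwise inequality
  have hptwise : ∀ n x, |φ n x - φ' n x| ≤ ε * φ' n x + C₀ * ψ x := by
    intro n x
    have := hkey (f n x - g x) (g x)
    rwa [sub_add_cancel] at this
  set W : ℕ → α → ℝ := fun n x => max (|φ' n x - φ n x + ψ x| - ε * φ' n x) 0 with hWdef
  have hW0 : ∀ n x, 0 ≤ W n x := fun n x => le_max_right _ _
  have hWm : ∀ m, AEMeasurable (W m) μ := by
    intro m
    have h1 : AEMeasurable (fun x => |φ' m x - φ m x + ψ x|) μ :=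
      measurable_abs.comp_aemeasurable (((hφ'm m).sub (hφm m)).add hψm)
    exact (h1.sub ((hφ'm m).const_mul ε)).max aemeasurable_const
  have hWub : ∀ n x, W n x ≤ (C₀ + 1) * ψ x := by
    intro n x
    refine max_le ?_ (by nlinarith [hψ0 x])
    have h1 : |φ' n x - φ n x + ψ x| ≤ |φ' n x - φ n x| + ψ x := by
      calc |φ' n x - φ n x + ψ x| ≤ |φ' n x - φ n x| + |ψ x| := abs_add_le _ _
        _ = |φ' n x - φ n x| + ψ x := by rw [abs_of_nonneg (hψ0 x)]
    have h2 : |φ' n x - φ n x| = |φ n x - φ' n x| := abs_sub_comm _ _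
    have h3 := hptwise n x
    linarith
  have hWbd : ∀ n x, |φ' n x - φ n x + ψ x| ≤ W n x + ε * φ' n x := by
    intro n x
    have := le_max_left (|φ' n x - φ n x + ψ x| - ε * φ' n x) 0
    linarith
  -- a.e. convergence of W to 0
  have hWlim : ∀ᵐ x ∂μ, Tendsto (fun n => W n x) atTop (𝓝 0) := by
    filter_upwards [hae] with x hx
    have habs : Tendsto (fun t : ℝ => |t| ^ p) (𝓝 (0:ℝ)) (𝓝 0) := by
      have := hcontp.tendsto 0
      simpa [Real.zero_rpow hp0.ne'] using this
    have hd : Tendsto (fun n => f n x - g x) atTop (𝓝 0) := by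
      simpa using hx.sub_const (g x)
    have hφ'lim : Tendsto (fun n => φ' n x) atTop (𝓝 0) := by
      exact habs.comp hd
    have hφlim : Tendsto (fun n => φ n x) atTop (𝓝 (ψ x)) := by
      exact (hcontp.tendsto (g x)).comp hx
    have hhx : Tendsto (fun n => |φ' n x - φ n x + ψ x| - ε * φ' n x) atTop (𝓝 0) := by
      have h1 : Tendsto (fun n => φ' n x - φ n x + ψ x) atTop (𝓝 0) := by
        have := (hφ'lim.sub hφlim).add_const (ψ x)
        simpa using this
      have h2 := h1.abs
      have h3 := hφ'lim.const_mul ε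
      simpa using h2.sub h3
    have := hhx.max (tendsto_const_nhds (x := (0:ℝ)))
    simpa using this
  -- dominated convergence for the lintegrals of W
  have hWtend : Tendsto (fun n => ∫⁻ x, ENNReal.ofReal (W n x) ∂μ) atTop (𝓝 0) := by
    have hWm : ∀ n, AEMeasurable (fun x => ENNReal.ofReal (W n x)) μ := by
      intro n
      exact ENNReal.measurable_ofReal.comp_aemeasurable (hWm n)
    have hbound : ∀ n, (fun x => ENNReal.ofReal (W n x)) ≤ᵐ[μ]
        fun x => ENNReal.ofReal ((C₀ + 1) * ψ x) :=
      fun n => ae_of_all _ fun x => ENNReal.ofReal_le_ofReal (hWub n x)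
    have hbfin : (∫⁻ x, ENNReal.ofReal ((C₀ + 1) * ψ x) ∂μ) ≠ ⊤ := by
      have : ∀ x, ENNReal.ofReal ((C₀ + 1) * ψ x)
          = ENNReal.ofReal (C₀ + 1) * ENNReal.ofReal (ψ x) := fun x =>
        ENNReal.ofReal_mul (by linarith)
      simp only [this]
      rw [lintegral_const_mul' _ _ ENNReal.ofReal_ne_top]
      exact ENNReal.mul_ne_top ENNReal.ofReal_ne_top hgfin
    have hlim : ∀ᵐ x ∂μ, Tendsto (fun n => ENNReal.ofReal (W n x)) atTop (𝓝 0) := by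
      filter_upwards [hWlim] with x hx
      simpa using ENNReal.tendsto_ofReal hx
    have := tendsto_lintegral_of_dominated_convergence' _ hWm hbound hbfin hlim
    simpa using this
  have hWtendR : Tendsto (fun n => (∫⁻ x, ENNReal.ofReal (W n x) ∂μ).toReal) atTop (𝓝 0) := by
    have := (ENNReal.tendsto_toReal (a := 0) (by simp)).comp hWtend
    simpa [Function.comp_def] using this
  rw [Metric.tendsto_atTop] at hWtendR
  obtain ⟨n₀, hn₀⟩ := hWtendR (η / 2) (by linarith)
  rw [eventually_atTop]
  refine ⟨n₀, fun n hn => ?_⟩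
  -- per-n final estimate
  have intW : Integrable (W n) μ := by
    refine Integrable.mono' (intψ.const_mul (C₀ + 1)) ?_ (ae_of_all _ fun x => ?_)
    · exact (hWm n).aestronglyMeasurable
    · rw [Real.norm_eq_abs, abs_of_nonneg (hW0 n x)]
      exact hWub n x
  have inth : Integrable (fun x => φ' n x - φ n x + ψ x) μ := ((intφ' n).sub (intφ n)).add intψ
  have step1 : |∫ x, (φ' n x - φ n x + ψ x) ∂μ| ≤ ∫ x, |φ' n x - φ n x + ψ x| ∂μ := by
    simpa [Real.norm_eq_abs] using
      norm_integral_le_integral_norm (fun x => φ' n x - φ n x + ψ x) (μ := μ)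
  have step2 : ∫ x, |φ' n x - φ n x + ψ x| ∂μ ≤ ∫ x, (W n x + ε * φ' n x) ∂μ :=
    integral_mono inth.abs (intW.add ((intφ' n).const_mul ε)) fun x => hWbd n x
  have step3 : ∫ x, (W n x + ε * φ' n x) ∂μ
      = (∫⁻ x, ENNReal.ofReal (W n x) ∂μ).toReal + ε * (A n).toReal := by
    rw [integral_add intW ((intφ' n).const_mul ε), integral_const_mul,
      integral_eq_lint (hWm n) (hW0 n), eqA n]
  have hAle : (A n).toReal ≤ M.toReal := ENNReal.toReal_mono hM (hAM n)
  have hWsmall : (∫⁻ x, ENNReal.ofReal (W n x) ∂μ).toReal < η / 2 := by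
    have := hn₀ n hn
    rw [Real.dist_eq, sub_zero] at this
    calc (∫⁻ x, ENNReal.ofReal (W n x) ∂μ).toReal
        ≤ |(∫⁻ x, ENNReal.ofReal (W n x) ∂μ).toReal| := le_abs_self _
      _ < η / 2 := this
  rw [Real.norm_eq_abs, hexpr n]
  have hεM : ε * (A n).toReal ≤ ε * M.toReal := mul_le_mul_of_nonneg_left hAle hε.le
  have hεM2 : ε * M.toReal < η / 2 := by
    rw [hεdef]
    rw [div_mul_eq_mul_div, div_lt_div_iff₀ (by positivity) (by norm_num)]
    nlinarith
  linarith [step1, step2, step3]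

end BL


end Aux

section Aux2
private lemma lint_diff_ne_top {α : Type*} [MeasurableSpace α] {μ : Measure α} {p : ℝ}
    (hp : 1 < p) {f g : α → ℝ} (hfm : AEMeasurable f μ)
    (hf : (∫⁻ x, ENNReal.ofReal (|f x| ^ p) ∂μ) ≠ ⊤)
    (hg : (∫⁻ x, ENNReal.ofReal (|g x| ^ p) ∂μ) ≠ ⊤) :
    (∫⁻ x, ENNReal.ofReal (|f x - g x| ^ p) ∂μ) ≠ ⊤ := by
  have hp0 : (0:ℝ) < p := lt_trans one_pos hp
  have hcontp : Continuous fun t : ℝ => |t| ^ p := by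
    rw [continuous_iff_continuousAt]
    intro t
    exact (Real.continuousAt_rpow_const _ _ (Or.inr hp0.le)).comp continuous_abs.continuousAt
  have step : ∀ x, ENNReal.ofReal (|f x - g x| ^ p) ≤
      ENNReal.ofReal (2 ^ p) * (ENNReal.ofReal (|f x| ^ p) + ENNReal.ofReal (|g x| ^ p)) := by
    intro x
    rw [← ENNReal.ofReal_add (Real.rpow_nonneg (abs_nonneg _) _)
      (Real.rpow_nonneg (abs_nonneg _) _), ← ENNReal.ofReal_mul (by positivity)]
    exact ENNReal.ofReal_le_ofReal (diff_rpow_le hp.le _ _)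
  have hofm : AEMeasurable (fun x => ENNReal.ofReal (|f x| ^ p)) μ :=
    ENNReal.measurable_ofReal.comp_aemeasurable (hcontp.measurable.comp_aemeasurable hfm)
  have hle : (∫⁻ x, ENNReal.ofReal (|f x - g x| ^ p) ∂μ) ≤
      ENNReal.ofReal (2 ^ p) * ((∫⁻ x, ENNReal.ofReal (|f x| ^ p) ∂μ)
        + (∫⁻ x, ENNReal.ofReal (|g x| ^ p) ∂μ)) := by
    calc (∫⁻ x, ENNReal.ofReal (|f x - g x| ^ p) ∂μ)
        ≤ ∫⁻ x, ENNReal.ofReal (2 ^ p) *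
          (ENNReal.ofReal (|f x| ^ p) + ENNReal.ofReal (|g x| ^ p)) ∂μ := lintegral_mono step
      _ = _ := by
          rw [lintegral_const_mul' _ _ ENNReal.ofReal_ne_top, lintegral_add_left' hofm]
  exact (lt_of_le_of_lt hle (ENNReal.mul_lt_top ENNReal.ofReal_lt_top
    (lt_top_iff_ne_top.2 (ENNReal.add_ne_top.2 ⟨hf, hg⟩)))).ne

/-- The measure `dx dy / |x-y|^E` on the product space. -/
private def mu1 (N : ℕ) (E : ℝ) : Measure (Euc N × Euc N) :=
  ((volume : Measure (Euc N)).prod volume).withDensity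
    (fun z => ENNReal.ofReal ((‖z.1 - z.2‖ ^ E)⁻¹))

/-- The measure `V(ε x) dx`. -/
private def mu2 (N : ℕ) (ε : ℝ) (V : Euc N → ℝ) : Measure (Euc N) :=
  volume.withDensity (fun x => ENNReal.ofReal (V (ε • x)))

private lemma gagliardo_eq {N : ℕ} {s p : ℝ} (hp0 : 0 < p) (hE : 0 ≤ (N : ℝ) + s * p)
    (w : Euc N → ℝ) (hw : Measurable w) :
    gagliardoP N s p w
      = ∫⁻ z, ENNReal.ofReal (|w z.1 - w z.2| ^ p) ∂(mu1 N ((N : ℝ) + s * p)) := by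
  have hcontp : Continuous fun t : ℝ => |t| ^ p := by
    rw [continuous_iff_continuousAt]
    intro t
    exact (Real.continuousAt_rpow_const _ _ (Or.inr hp0.le)).comp continuous_abs.continuousAt
  have hkerm : Measurable fun z : Euc N × Euc N =>
      ENNReal.ofReal ((‖z.1 - z.2‖ ^ ((N : ℝ) + s * p))⁻¹) := by
    apply ENNReal.measurable_ofReal.comp
    apply Measurable.inv
    exact ((Real.continuous_rpow_const hE).comp
      (continuous_fst.sub continuous_snd).norm).measurable
  have hwm2 : Measurable fun z : Euc N × Euc N => ENNReal.ofReal (|w z.1 - w z.2| ^ p) :=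
    ENNReal.measurable_ofReal.comp (hcontp.measurable.comp
      ((hw.comp measurable_fst).sub (hw.comp measurable_snd)))
  have hqm : Measurable fun z : Euc N × Euc N =>
      ENNReal.ofReal (|w z.1 - w z.2| ^ p / ‖z.1 - z.2‖ ^ ((N : ℝ) + s * p)) := by
    apply ENNReal.measurable_ofReal.comp
    exact (hcontp.measurable.comp
      ((hw.comp measurable_fst).sub (hw.comp measurable_snd))).div
      ((Real.continuous_rpow_const hE).comp
        (continuous_fst.sub continuous_snd).norm).measurable
  calc gagliardoP N s p w
      = ∫⁻ z : Euc N × Euc N,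
          ENNReal.ofReal (|w z.1 - w z.2| ^ p / ‖z.1 - z.2‖ ^ ((N : ℝ) + s * p))
          ∂((volume : Measure (Euc N)).prod volume) :=
        (lintegral_prod _ hqm.aemeasurable).symm
    _ = ∫⁻ z : Euc N × Euc N, (fun z : Euc N × Euc N =>
          ENNReal.ofReal ((‖z.1 - z.2‖ ^ ((N : ℝ) + s * p))⁻¹)) z *
          ENNReal.ofReal (|w z.1 - w z.2| ^ p) ∂((volume : Measure (Euc N)).prod volume) := by
        refine lintegral_congr fun z => ?_
        rw [div_eq_inv_mul, ENNReal.ofReal_mul (by positivity)]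
    _ = ∫⁻ z, ENNReal.ofReal (|w z.1 - w z.2| ^ p) ∂(mu1 N ((N : ℝ) + s * p)) :=
        (lintegral_withDensity_eq_lintegral_mul _ hkerm hwm2).symm

private lemma lp_eq {N : ℕ} {p ε : ℝ} (hp0 : 0 < p) (V : Euc N → ℝ) (hVc : Continuous V)
    (hV0 : ∀ x, 0 ≤ V x) (w : Euc N → ℝ) (hw : Measurable w) :
    (∫⁻ x, ENNReal.ofReal (V (ε • x) * |w x| ^ p))
      = ∫⁻ x, ENNReal.ofReal (|w x| ^ p) ∂(mu2 N ε V) := by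
  have hcontp : Continuous fun t : ℝ => |t| ^ p := by
    rw [continuous_iff_continuousAt]
    intro t
    exact (Real.continuousAt_rpow_const _ _ (Or.inr hp0.le)).comp continuous_abs.continuousAt
  have hVm : Measurable fun x : Euc N => ENNReal.ofReal (V (ε • x)) :=
    ENNReal.measurable_ofReal.comp (hVc.comp (continuous_const_smul ε)).measurable
  have hwm2 : Measurable fun x => ENNReal.ofReal (|w x| ^ p) :=
    ENNReal.measurable_ofReal.comp (hcontp.measurable.comp hw)
  calc (∫⁻ x, ENNReal.ofReal (V (ε • x) * |w x| ^ p))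
      = ∫⁻ x, (fun x : Euc N => ENNReal.ofReal (V (ε • x))) x
          * ENNReal.ofReal (|w x| ^ p) := by
        refine lintegral_congr fun x => ?_
        rw [ENNReal.ofReal_mul (hV0 _)]
    _ = ∫⁻ x, ENNReal.ofReal (|w x| ^ p) ∂(mu2 N ε V) :=
        (lintegral_withDensity_eq_lintegral_mul _ hVm hwm2).symm

end Aux2

set_option maxHeartbeats 2000000 in
/-- Brezis–Lieb splitting for the `‖·‖_ε` norm (Lemma 2.4):
`‖u_n − u‖_ε^p = ‖u_n‖_ε^p − ‖u‖_ε^p + o(1)`. -/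
theorem stmt_4 {N : ℕ} {s p : ℝ} (hs0 : 0 < s) (hs1 : s < 1) (hp : 1 < p)
    (hN : s * p < (N : ℝ))
    (V : Euc N → ℝ) (hVc : Continuous V)
    (V₀ : ℝ) (hV₀ : 0 < V₀) (hVlb : ∀ x, V₀ ≤ V x)
    (ε : ℝ) (hε : 0 < ε)
    (u : ℕ → Euc N → ℝ) (hmeas : ∀ n, Measurable (u n))
    (hbdd : (⨆ n, normEpsP N s p ε V (u n)) < ⊤)
    (v : Euc N → ℝ) (hvmeas : Measurable v)
    (hvfin : normEpsP N s p ε V v < ⊤)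
    (hae : ∀ᵐ x : Euc N ∂volume, Tendsto (fun n => u n x) atTop (nhds (v x))) :
    Tendsto (fun n => (normEpsP N s p ε V (fun x => u n x - v x)).toReal
        - ((normEpsP N s p ε V (u n)).toReal - (normEpsP N s p ε V v).toReal))
      atTop (nhds 0) := by
  have hp0 : (0:ℝ) < p := lt_trans one_pos hp
  have hE : (0:ℝ) ≤ (N : ℝ) + s * p := by positivity
  have hV0 : ∀ x : Euc N, 0 ≤ V x := fun x => le_trans hV₀.le (hVlb x)
  -- a.e. convergence on the product space
  have haeprod : ∀ᵐ z : Euc N × Euc N ∂((volume : Measure (Euc N)).prod volume),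
      Tendsto (fun n => u n z.1 - u n z.2) atTop (𝓝 (v z.1 - v z.2)) := by
    have hT : volume {x : Euc N | ¬ Tendsto (fun n => u n x) atTop (𝓝 (v x))} = 0 :=
      ae_iff.mp hae
    obtain ⟨S, hsub, hSm, hS0⟩ := exists_measurable_superset_of_null hT
    have h1 : ((volume : Measure (Euc N)).prod volume) (S ×ˢ (Set.univ : Set (Euc N))) = 0 := by
      rw [Measure.prod_prod, hS0, zero_mul]
    have h2 : ((volume : Measure (Euc N)).prod volume) ((Set.univ : Set (Euc N)) ×ˢ S) = 0 := by
      rw [Measure.prod_prod, hS0, mul_zero]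
    have h3 : ∀ᵐ z : Euc N × Euc N ∂((volume : Measure (Euc N)).prod volume),
        z.1 ∉ S ∧ z.2 ∉ S := by
      rw [ae_iff]
      refine measure_mono_null ?_ (measure_union_null h1 h2)
      intro z hz
      simp only [Set.mem_setOf_eq, not_and_or, not_not] at hz
      rcases hz with h | h
      · exact Or.inl ⟨h, trivial⟩
      · exact Or.inr ⟨trivial, h⟩
    filter_upwards [h3] with z hz
    have t1 : Tendsto (fun n => u n z.1) atTop (𝓝 (v z.1)) :=
      not_not.mp fun hc => hz.1 (hsub hc)
    have t2 : Tendsto (fun n => u n z.2) atTop (𝓝 (v z.2)) :=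
      not_not.mp fun hc => hz.2 (hsub hc)
    exact t1.sub t2
  -- bounds
  have hCne : (⨆ n, normEpsP N s p ε V (u n)) ≠ ⊤ := hbdd.ne
  have hGle : ∀ n, gagliardoP N s p (u n) ≤ ⨆ n, normEpsP N s p ε V (u n) :=
    fun n => le_trans le_self_add (le_iSup (fun n => normEpsP N s p ε V (u n)) n)
  have hLle : ∀ n, (∫⁻ x, ENNReal.ofReal (V (ε • x) * |u n x| ^ p))
      ≤ ⨆ n, normEpsP N s p ε V (u n) :=
    fun n => le_trans le_add_self (le_iSup (fun n => normEpsP N s p ε V (u n)) n)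
  have hGvfin : gagliardoP N s p v ≠ ⊤ := (lt_of_le_of_lt le_self_add hvfin).ne
  have hLvfin : (∫⁻ x, ENNReal.ofReal (V (ε • x) * |v x| ^ p)) ≠ ⊤ :=
    (lt_of_le_of_lt le_add_self hvfin).ne
  -- measurability of the pair functions
  have hfm1 : ∀ n, AEMeasurable (fun z : Euc N × Euc N => u n z.1 - u n z.2)
      (mu1 N ((N : ℝ) + s * p)) := fun n =>
    (((hmeas n).comp measurable_fst).sub ((hmeas n).comp measurable_snd)).aemeasurable
  have hgm1 : AEMeasurable (fun z : Euc N × Euc N => v z.1 - v z.2)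
      (mu1 N ((N : ℝ) + s * p)) :=
    ((hvmeas.comp measurable_fst).sub (hvmeas.comp measurable_snd)).aemeasurable
  -- apply Brezis–Lieb on mu1
  have T1 := brezis_lieb (μ := mu1 N ((N : ℝ) + s * p)) hp
    (fun n z => u n z.1 - u n z.2) hfm1
    (fun z => v z.1 - v z.2) hgm1 (⨆ n, normEpsP N s p ε V (u n)) hCne
    (fun n => le_trans (le_of_eq (gagliardo_eq hp0 hE (u n) (hmeas n)).symm) (hGle n))
    (fun h => hGvfin (Eq.trans (gagliardo_eq hp0 hE v hvmeas) h))
    (haeprod.filter_mono (Measure.AbsolutelyContinuous.ae_le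
      (withDensity_absolutelyContinuous _ _)))
  -- apply Brezis–Lieb on mu2
  have T2 := brezis_lieb (μ := mu2 N ε V) hp u (fun n => (hmeas n).aemeasurable)
    v hvmeas.aemeasurable (⨆ n, normEpsP N s p ε V (u n)) hCne
    (fun n => le_trans (le_of_eq (lp_eq hp0 V hVc hV0 (u n) (hmeas n)).symm) (hLle n))
    (fun h => hLvfin (Eq.trans (lp_eq hp0 V hVc hV0 v hvmeas) h))
    (hae.filter_mono (Measure.AbsolutelyContinuous.ae_le
      (withDensity_absolutelyContinuous _ _)))
  -- identify the difference term on the product space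
  have hdiffeq : ∀ n, (∫⁻ z, ENNReal.ofReal
        (|(u n z.1 - u n z.2) - (v z.1 - v z.2)| ^ p) ∂(mu1 N ((N : ℝ) + s * p)))
      = gagliardoP N s p (fun x => u n x - v x) := by
    intro n
    rw [gagliardo_eq hp0 hE (fun x => u n x - v x) ((hmeas n).sub hvmeas)]
    refine lintegral_congr fun z => ?_
    rw [show (u n z.1 - u n z.2) - (v z.1 - v z.2)
      = (u n z.1 - v z.1) - (u n z.2 - v z.2) from by ring]
  -- finiteness of all six pieces
  have hGfin : ∀ n, gagliardoP N s p (u n) ≠ ⊤ :=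
    fun n => (lt_of_le_of_lt (hGle n) (lt_top_iff_ne_top.2 hCne)).ne
  have hLfin : ∀ n, (∫⁻ x, ENNReal.ofReal (V (ε • x) * |u n x| ^ p)) ≠ ⊤ :=
    fun n => (lt_of_le_of_lt (hLle n) (lt_top_iff_ne_top.2 hCne)).ne
  have hG'fin : ∀ n, gagliardoP N s p (fun x => u n x - v x) ≠ ⊤ := by
    intro n
    rw [← hdiffeq n]
    exact lint_diff_ne_top hp (hfm1 n)
      (fun h => hGfin n (Eq.trans (gagliardo_eq hp0 hE (u n) (hmeas n)) h))
      (fun h => hGvfin (Eq.trans (gagliardo_eq hp0 hE v hvmeas) h))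
  have hL'fin : ∀ n, (∫⁻ x, ENNReal.ofReal (V (ε • x) * |u n x - v x| ^ p)) ≠ ⊤ := by
    intro n
    rw [lp_eq hp0 V hVc hV0 (fun x => u n x - v x) ((hmeas n).sub hvmeas)]
    exact lint_diff_ne_top hp (hmeas n).aemeasurable
      (fun h => hLfin n (Eq.trans (lp_eq hp0 V hVc hV0 (u n) (hmeas n)) h))
      (fun h => hLvfin (Eq.trans (lp_eq hp0 V hVc hV0 v hvmeas) h))
  -- assemble
  have heq : ∀ n, ((∫⁻ z, ENNReal.ofReal
            (|(u n z.1 - u n z.2) - (v z.1 - v z.2)| ^ p) ∂(mu1 N ((N : ℝ) + s * p))).toReal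
          - ((∫⁻ z, ENNReal.ofReal (|u n z.1 - u n z.2| ^ p)
              ∂(mu1 N ((N : ℝ) + s * p))).toReal
            - (∫⁻ z, ENNReal.ofReal (|v z.1 - v z.2| ^ p)
              ∂(mu1 N ((N : ℝ) + s * p))).toReal))
        + ((∫⁻ x, ENNReal.ofReal (|u n x - v x| ^ p) ∂(mu2 N ε V)).toReal
          - ((∫⁻ x, ENNReal.ofReal (|u n x| ^ p) ∂(mu2 N ε V)).toReal
            - (∫⁻ x, ENNReal.ofReal (|v x| ^ p) ∂(mu2 N ε V)).toReal))
      = (normEpsP N s p ε V (fun x => u n x - v x)).toReal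
        - ((normEpsP N s p ε V (u n)).toReal - (normEpsP N s p ε V v).toReal) := by
    intro n
    rw [show normEpsP N s p ε V (fun x => u n x - v x)
        = gagliardoP N s p (fun x => u n x - v x)
          + ∫⁻ x, ENNReal.ofReal (V (ε • x) * |u n x - v x| ^ p) from rfl,
      show normEpsP N s p ε V (u n)
        = gagliardoP N s p (u n)
          + ∫⁻ x, ENNReal.ofReal (V (ε • x) * |u n x| ^ p) from rfl,
      show normEpsP N s p ε V v
        = gagliardoP N s p v
          + ∫⁻ x, ENNReal.ofReal (V (ε • x) * |v x| ^ p) from rfl,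
      ENNReal.toReal_add (hG'fin n) (hL'fin n),
      ENNReal.toReal_add (hGfin n) (hLfin n),
      ENNReal.toReal_add hGvfin hLvfin,
      hdiffeq n, gagliardo_eq hp0 hE (u n) (hmeas n), gagliardo_eq hp0 hE v hvmeas,
      lp_eq hp0 V hVc hV0 (u n) (hmeas n), lp_eq hp0 V hVc hV0 v hvmeas,
      lp_eq hp0 V hVc hV0 (fun x => u n x - v x) ((hmeas n).sub hvmeas)]
    ring
  exact (T1.add T2).congr heq |>.mono_right (by rw [add_zero])
end
end
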